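/- arXiv:1912.03261 — 8 statements merged into one kernel-verified Lean document; each statement's English description precedes it below -/
import Mathlib

section
/- Let ξ = (ξ_n)_{n∈ℕ} be any sequence in H. Then: (i) C_ξ = D_ξ* (the Hilbert-space adjoint of the densely defined operator D_ξ), and consequently C_ξ is a closed operator; (ii) if D(C_ξ) is dense in H, then D_ξ ⊆ C_ξ*; (iii) D_ξ is closable if and only if D(C_ξ) is dense in H; (iv) D_ξ is closed if and only if D(C_ξ) is dense in H and D_ξ = C_ξ*; (v) S_ξ = D_ξ C_ξ (equality of unbounded operators, including equality of domains). -/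
noncomputable section
open scoped InnerProductSpace ComplexInnerProductSpace ComplexConjugate ENNReal
open Filter Topology

/- `H` is a separable complex Hilbert space. -/
variable {H : Type} [NormedAddCommGroup H] [InnerProductSpace ℂ H] [CompleteSpace H]
  [TopologicalSpace.SeparableSpace H]

/-- The space `ℓ²(ℕ)` of square-summable complex sequences. -/
abbrev l2 : Type := lp (fun _ : ℕ => ℂ) 2

/-- The domain of the analysis operator `C_ξ`:
`D(C_ξ) = {f ∈ H : Σ_n |⟨f,ξ_n⟩|² < ∞}`.  (The paper's inner product `⟨f,ξ_n⟩`, linear in `f`,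
is `⟪ξ n, f⟫_ℂ` in Mathlib's convention.) -/
def domC (ξ : ℕ → H) : Set H := {f : H | Memℓp (fun n => ⟪ξ n, f⟫_ℂ) 2}

open Classical in
/-- The analysis operator `C_ξ f = (⟨f,ξ_n⟩)_n`, with junk value `0` outside of its domain. -/
def Cfun (ξ : ℕ → H) (f : H) : l2 :=
  if h : Memℓp (fun n => ⟪ξ n, f⟫_ℂ) 2 then ⟨_, h⟩ else 0

/-- The domain of the synthesis operator `D_ξ`:
`D(D_ξ) = {(c_n) ∈ ℓ² : Σ_n c_n ξ_n converges in norm in H}`. -/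
def domD (ξ : ℕ → H) : Set l2 :=
  {c : l2 | ∃ L : H, Tendsto (fun k : ℕ => ∑ n ∈ Finset.range k, c n • ξ n) atTop (𝓝 L)}

/-- The domain of the frame operator `S_ξ`:
`D(S_ξ) = {f ∈ H : Σ_n ⟨f,ξ_n⟩ ξ_n converges in norm in H}`. -/
def domS (ξ : ℕ → H) : Set H :=
  {f : H | ∃ L : H, Tendsto (fun k : ℕ => ∑ n ∈ Finset.range k, ⟪ξ n, f⟫_ℂ • ξ n) atTop (𝓝 L)}

/-- The domain of the generalized frame operator `T_ξ`: those `f ∈ D(C_ξ)` for which there is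
`h` in `H_ξ = closure D(C_ξ)` with `Σ_n ⟨f,ξ_n⟩⟨ξ_n,g⟩ = ⟨h,g⟩` for all `g ∈ D(C_ξ)`. -/
def domT (ξ : ℕ → H) : Set H :=
  {f : H | f ∈ domC ξ ∧ ∃ h ∈ closure (domC ξ), ∀ g ∈ domC ξ,
    ∑' n : ℕ, ⟪ξ n, f⟫_ℂ * ⟪g, ξ n⟫_ℂ = ⟪g, h⟫_ℂ}

/-- The domain of `Q_ξ`: those `(c_n) ∈ ℓ²` whose partial sums `Σ_{n<k} c_n ξ_n`
converge weakly in `H`. -/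
def domQ (ξ : ℕ → H) : Set l2 :=
  {c : l2 | ∃ L : H, ∀ y : H,
    Tendsto (fun k : ℕ => ⟪y, ∑ n ∈ Finset.range k, c n • ξ n⟫_ℂ) atTop (𝓝 ⟪y, L⟫_ℂ)}

/-- The domain of the weak frame operator `W_ξ`: those `f ∈ H` whose partial sums
`Σ_{n<k} ⟨f,ξ_n⟩ ξ_n` converge weakly in `H`. -/
def domW (ξ : ℕ → H) : Set H :=
  {f : H | ∃ L : H, ∀ y : H,
    Tendsto (fun k : ℕ => ⟪y, ∑ n ∈ Finset.range k, ⟪ξ n, f⟫_ℂ • ξ n⟫_ℂ) atTop (𝓝 ⟪y, L⟫_ℂ)}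


set_option linter.unusedSectionVars false

lemma Cfun_apply {ξ : ℕ → H} {f : H} (hf : f ∈ domC ξ) (n : ℕ) :
    (Cfun ξ f) n = ⟪ξ n, f⟫_ℂ := by
  have h1 : Cfun ξ f = ⟨fun n => ⟪ξ n, f⟫_ℂ, hf⟩ := dif_pos hf
  rw [h1]

lemma tendsto_single (ξ : ℕ → H) (n : ℕ) :
    Tendsto (fun k : ℕ => ∑ m ∈ Finset.range k, (lp.single 2 n (1:ℂ) : l2) m • ξ m)
      atTop (𝓝 (ξ n)) := by
  apply tendsto_atTop_of_eventually_const (i₀ := n + 1)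
  intro k hk
  rw [Finset.sum_eq_single_of_mem n (Finset.mem_range.2 hk)]
  · rw [lp.single_apply_self, one_smul]
  · intro m _ hm
    rw [lp.single_apply_ne _ _ _ hm, zero_smul]

lemma tendsto_zero_lp (ξ : ℕ → H) :
    Tendsto (fun k : ℕ => ∑ n ∈ Finset.range k, (0 : l2) n • ξ n) atTop (𝓝 (0 : H)) := by
  have : (fun k : ℕ => ∑ n ∈ Finset.range k, (0 : l2) n • ξ n) = fun _ => (0 : H) := by
    funext k; simp [lp.coeFn_zero]
  rw [this]; exact tendsto_const_nhds

lemma tendsto_add_lp {ξ : ℕ → H} {c c' : l2} {L L' : H}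
    (h : Tendsto (fun k : ℕ => ∑ n ∈ Finset.range k, c n • ξ n) atTop (𝓝 L))
    (h' : Tendsto (fun k : ℕ => ∑ n ∈ Finset.range k, c' n • ξ n) atTop (𝓝 L')) :
    Tendsto (fun k : ℕ => ∑ n ∈ Finset.range k, (c + c') n • ξ n) atTop (𝓝 (L + L')) := by
  have heq : (fun k : ℕ => ∑ n ∈ Finset.range k, (c + c') n • ξ n)
      = fun k : ℕ => (∑ n ∈ Finset.range k, c n • ξ n) + ∑ n ∈ Finset.range k, c' n • ξ n := by
    funext k
    simp [lp.coeFn_add, add_smul, Finset.sum_add_distrib]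
  rw [heq]; exact h.add h'

lemma tendsto_smul_lp {ξ : ℕ → H} {c : l2} {L : H} (a : ℂ)
    (h : Tendsto (fun k : ℕ => ∑ n ∈ Finset.range k, c n • ξ n) atTop (𝓝 L)) :
    Tendsto (fun k : ℕ => ∑ n ∈ Finset.range k, (a • c) n • ξ n) atTop (𝓝 (a • L)) := by
  have heq : (fun k : ℕ => ∑ n ∈ Finset.range k, (a • c) n • ξ n)
      = fun k : ℕ => a • ∑ n ∈ Finset.range k, c n • ξ n := by
    funext k
    rw [Finset.smul_sum]
    refine Finset.sum_congr rfl fun n _ => ?_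
    rw [lp.coeFn_smul, Pi.smul_apply, smul_smul, smul_eq_mul]
  rw [heq]; exact h.const_smul a

def domCsub (ξ : ℕ → H) : Submodule ℂ H where
  carrier := domC ξ
  zero_mem' := by
    have : (fun n => ⟪ξ n, (0:H)⟫_ℂ) = 0 := by funext n; simp
    show Memℓp _ 2
    rw [this]; exact zero_memℓp
  add_mem' := by
    intro f g hf hg
    have : (fun n => ⟪ξ n, f + g⟫_ℂ)
        = (fun n => ⟪ξ n, f⟫_ℂ) + fun n => ⟪ξ n, g⟫_ℂ := by
      funext n; simp [inner_add_right]
    show Memℓp _ 2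
    rw [this]; exact Memℓp.add hf hg
  smul_mem' := by
    intro a f hf
    have : (fun n => ⟪ξ n, a • f⟫_ℂ) = a • fun n => ⟪ξ n, f⟫_ℂ := by
      funext n; simp [inner_smul_right]
    show Memℓp _ 2
    rw [this]; exact Memℓp.const_smul hf a

lemma dense_domC_iff (ξ : ℕ → H) :
    Dense (domC ξ) ↔ ∀ L : H, (∀ f ∈ domC ξ, ⟪L, f⟫_ℂ = 0) → L = 0 := by
  constructor
  · intro hd L hL
    exact Dense.eq_zero_of_inner_left (𝕜 := ℂ) hd fun v hv => hL v hv
  · intro hL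
    have : (domCsub ξ).topologicalClosure = ⊤ := by
      rw [Submodule.topologicalClosure_eq_top_iff, Submodule.eq_bot_iff]
      intro x hx
      exact hL x fun f hf => (Submodule.mem_orthogonal' _ _).1 hx f hf
    have := Submodule.dense_iff_topologicalClosure_eq_top.2 this
    exact this

/-- For any sequence `ξ` in `H`, with `Dfun`/`Sfun` the synthesis and frame
operators (characterized on their domains by norm convergence of the partial sums):
(i) `C_ξ = D_ξ*` (the graph of the Hilbert adjoint of `D_ξ` is exactly the graph of `C_ξ`),
and consequently `C_ξ` is a closed operator; (ii) if `D(C_ξ)` is dense, then `D_ξ ⊆ C_ξ*`;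
(iii) `D_ξ` is closable iff `D(C_ξ)` is dense; (iv) `D_ξ` is closed iff `D(C_ξ)` is dense and
`D_ξ = C_ξ*`; (v) `S_ξ = D_ξ C_ξ`, including equality of domains. -/
theorem statement0 (ξ : ℕ → H)
    (Dfun : l2 → H)
    (hD : ∀ c ∈ domD ξ,
      Tendsto (fun k : ℕ => ∑ n ∈ Finset.range k, c n • ξ n) atTop (𝓝 (Dfun c)))
    (Sfun : H → H)
    (hS : ∀ f ∈ domS ξ,
      Tendsto (fun k : ℕ => ∑ n ∈ Finset.range k, ⟪ξ n, f⟫_ℂ • ξ n) atTop (𝓝 (Sfun f))) :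
    -- (i) C_ξ = D_ξ* ...
    (∀ (f : H) (h : l2),
      (∀ c ∈ domD ξ, ⟪h, c⟫_ℂ = ⟪f, Dfun c⟫_ℂ) ↔ (f ∈ domC ξ ∧ Cfun ξ f = h))
    -- ... and consequently C_ξ is closed
    ∧ IsClosed {p : H × l2 | p.1 ∈ domC ξ ∧ Cfun ξ p.1 = p.2}
    -- (ii) if D(C_ξ) is dense then D_ξ ⊆ C_ξ*
    ∧ (Dense (domC ξ) → ∀ c ∈ domD ξ, ∀ f ∈ domC ξ, ⟪Dfun c, f⟫_ℂ = ⟪c, Cfun ξ f⟫_ℂ)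
    -- (iii) D_ξ is closable iff D(C_ξ) is dense
    ∧ ((∀ L : H, ((0 : l2), L) ∈ closure {p : l2 × H | p.1 ∈ domD ξ ∧ Dfun p.1 = p.2} → L = 0)
        ↔ Dense (domC ξ))
    -- (iv) D_ξ is closed iff D(C_ξ) is dense and D_ξ = C_ξ*
    ∧ (IsClosed {p : l2 × H | p.1 ∈ domD ξ ∧ Dfun p.1 = p.2}
        ↔ (Dense (domC ξ) ∧ ∀ (c : l2) (L : H),
            (c ∈ domD ξ ∧ Dfun c = L) ↔ (∀ f ∈ domC ξ, ⟪L, f⟫_ℂ = ⟪c, Cfun ξ f⟫_ℂ)))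
    -- (v) S_ξ = D_ξ C_ξ, equality of domains included
    ∧ (domS ξ = {f : H | f ∈ domC ξ ∧ Cfun ξ f ∈ domD ξ}
        ∧ ∀ f ∈ domS ξ, Sfun f = Dfun (Cfun ξ f)) := by
  have hDu : ∀ {c : l2} {L : H},
      Tendsto (fun k : ℕ => ∑ n ∈ Finset.range k, c n • ξ n) atTop (𝓝 L) → Dfun c = L :=
    fun {c L} hc => tendsto_nhds_unique (hD c ⟨L, hc⟩) hc
  have hA : ∀ f ∈ domC ξ, ∀ c ∈ domD ξ, ⟪f, Dfun c⟫_ℂ = ⟪Cfun ξ f, c⟫_ℂ := by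
    intro f hf c hc
    have h1 : Tendsto (fun k : ℕ => ⟪f, ∑ n ∈ Finset.range k, c n • ξ n⟫_ℂ) atTop
        (𝓝 ⟪f, Dfun c⟫_ℂ) := tendsto_const_nhds.inner (hD c hc)
    have h2 : (fun k : ℕ => ⟪f, ∑ n ∈ Finset.range k, c n • ξ n⟫_ℂ)
        = fun k : ℕ => ∑ n ∈ Finset.range k, ⟪(Cfun ξ f) n, c n⟫_ℂ := by
      funext k
      rw [inner_sum]
      refine Finset.sum_congr rfl fun n _ => ?_
      rw [inner_smul_right, Cfun_apply hf, RCLike.inner_apply, inner_conj_symm, mul_comm]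
    have h3 : Tendsto (fun k : ℕ => ∑ n ∈ Finset.range k, ⟪(Cfun ξ f) n, c n⟫_ℂ) atTop
        (𝓝 ⟪Cfun ξ f, c⟫_ℂ) := (lp.hasSum_inner (Cfun ξ f) c).tendsto_sum_nat
    rw [h2] at h1
    exact tendsto_nhds_unique h1 h3
  have hI : ∀ (f : H) (h : l2),
      (∀ c ∈ domD ξ, ⟪h, c⟫_ℂ = ⟪f, Dfun c⟫_ℂ) ↔ (f ∈ domC ξ ∧ Cfun ξ f = h) := by
    intro f h
    constructor
    · intro hyp
      have hcoord : ∀ n, h n = ⟪ξ n, f⟫_ℂ := by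
        intro n
        have hs := hyp (lp.single 2 n 1) ⟨ξ n, tendsto_single ξ n⟩
        rw [hDu (tendsto_single ξ n)] at hs
        have hl : ⟪h, (lp.single 2 n (1:ℂ) : l2)⟫_ℂ = conj (h n) := by
          rw [← inner_conj_symm, lp.inner_single_left]
          simp [RCLike.inner_apply]
        rw [hl] at hs
        have := congrArg conj hs
        simpa using this
      have hfun : (fun n => ⟪ξ n, f⟫_ℂ) = ⇑h := funext fun n => (hcoord n).symm
      have hm : f ∈ domC ξ := by
        show Memℓp _ 2
        rw [hfun]; exact lp.memℓp h
      refine ⟨hm, ?_⟩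
      apply lp.ext
      funext n
      rw [Cfun_apply hm, hcoord]
    · rintro ⟨hf, rfl⟩ c hc
      exact (hA f hf c hc).symm
  have hclosedC : IsClosed {p : H × l2 | p.1 ∈ domC ξ ∧ Cfun ξ p.1 = p.2} := by
    have hset : {p : H × l2 | p.1 ∈ domC ξ ∧ Cfun ξ p.1 = p.2}
        = ⋂ c ∈ domD ξ, {p : H × l2 | ⟪p.2, c⟫_ℂ = ⟪p.1, Dfun c⟫_ℂ} := by
      ext p
      simp only [Set.mem_iInter, Set.mem_setOf_eq]
      exact (hI p.1 p.2).symm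
    rw [hset]
    exact isClosed_biInter fun c _ =>
      isClosed_eq (continuous_snd.inner continuous_const) (continuous_fst.inner continuous_const)
  have hII : ∀ c ∈ domD ξ, ∀ f ∈ domC ξ, ⟪Dfun c, f⟫_ℂ = ⟪c, Cfun ξ f⟫_ℂ := by
    intro c hc f hf
    calc ⟪Dfun c, f⟫_ℂ = conj ⟪f, Dfun c⟫_ℂ := (inner_conj_symm _ _).symm
      _ = conj ⟪Cfun ξ f, c⟫_ℂ := by rw [hA f hf c hc]
      _ = ⟪c, Cfun ξ f⟫_ℂ := inner_conj_symm _ _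
  have hDzero : Dfun 0 = 0 := hDu (tendsto_zero_lp ξ)
  -- the graph of D as a submodule of `WithLp 2 (l2 × H)`
  let G : Submodule ℂ (WithLp 2 (l2 × H)) :=
    { carrier := {x | x.fst ∈ domD ξ ∧ Dfun x.fst = x.snd}
      zero_mem' := ⟨⟨0, tendsto_zero_lp ξ⟩, hDzero⟩
      add_mem' := by
        rintro x y ⟨hx1, hx2⟩ ⟨hy1, hy2⟩
        have hadd := tendsto_add_lp (hD _ hx1) (hD _ hy1)
        exact ⟨⟨_, hadd⟩, (hDu hadd).trans (by rw [hx2, hy2]; rfl)⟩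
      smul_mem' := by
        rintro a x ⟨hx1, hx2⟩
        have hsmul := tendsto_smul_lp a (hD _ hx1)
        exact ⟨⟨_, hsmul⟩, (hDu hsmul).trans (by rw [hx2]; rfl)⟩ }
  have hGmem : ∀ x : WithLp 2 (l2 × H), x ∈ G ↔ (x.fst ∈ domD ξ ∧ Dfun x.fst = x.snd) :=
    fun x => Iff.rfl
  have hGperp : ∀ y : WithLp 2 (l2 × H),
      y ∈ Gᗮ ↔ (-y.snd ∈ domC ξ ∧ Cfun ξ (-y.snd) = y.fst) := by
    intro y
    rw [← hI (-y.snd) y.fst, Submodule.mem_orthogonal]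
    constructor
    · intro hy c hc
      have hx : ((WithLp.equiv 2 (l2 × H)).symm (c, Dfun c)) ∈ G := by
        rw [hGmem, WithLp.equiv_symm_apply]
        simp only [WithLp.toLp_fst, WithLp.toLp_snd]
        exact ⟨hc, trivial⟩
      have h0 := hy _ hx
      rw [WithLp.prod_inner_apply, WithLp.equiv_symm_apply] at h0
      simp only [WithLp.ofLp_toLp, WithLp.ofLp_fst, WithLp.ofLp_snd] at h0
      have h0' := congrArg conj h0
      rw [map_add, inner_conj_symm, inner_conj_symm, map_zero] at h0'
      rw [inner_neg_left]
      linear_combination h0'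
    · rintro hCy x hx
      rw [hGmem] at hx
      obtain ⟨hx1, hx2⟩ := hx
      have hAx := hCy x.fst hx1
      rw [inner_neg_left, hx2] at hAx
      have h' := congrArg conj hAx
      rw [map_neg, inner_conj_symm, inner_conj_symm] at h'
      rw [WithLp.prod_inner_apply]
      simp only [WithLp.ofLp_fst, WithLp.ofLp_snd]
      linear_combination h'
  have hGclos : ∀ z : l2 × H,
      (z ∈ closure {p : l2 × H | p.1 ∈ domD ξ ∧ Dfun p.1 = p.2}
        ↔ ∀ f ∈ domC ξ, ⟪z.2, f⟫_ℂ = ⟪z.1, Cfun ξ f⟫_ℂ) := by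
    intro z
    have e := (WithLp.prodContinuousLinearEquiv 2 ℂ l2 H).toHomeomorph
    have hpre : (WithLp.prodContinuousLinearEquiv 2 ℂ l2 H).toHomeomorph ⁻¹'
        {p : l2 × H | p.1 ∈ domD ξ ∧ Dfun p.1 = p.2} = (G : Set (WithLp 2 (l2 × H))) := rfl
    have h1 : z ∈ closure {p : l2 × H | p.1 ∈ domD ξ ∧ Dfun p.1 = p.2}
        ↔ ((WithLp.equiv 2 (l2 × H)).symm z) ∈ closure (G : Set (WithLp 2 (l2 × H))) := by
      rw [← hpre, ← Homeomorph.preimage_closure]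
      exact Iff.rfl
    rw [h1, ← Submodule.topologicalClosure_coe, ← Submodule.orthogonal_orthogonal_eq_closure,
      SetLike.mem_coe, Submodule.mem_orthogonal]
    constructor
    · intro hz f hf
      have hy : (WithLp.equiv 2 (l2 × H)).symm (Cfun ξ f, -f) ∈ Gᗮ := by
        rw [hGperp, WithLp.equiv_symm_apply]
        simp only [WithLp.toLp_fst, WithLp.toLp_snd, neg_neg]
        exact ⟨hf, trivial⟩
      have h0 := hz _ hy
      rw [WithLp.prod_inner_apply, WithLp.equiv_symm_apply] at h0
      simp only [WithLp.ofLp_toLp] at h0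
      have h0' := congrArg conj h0
      rw [map_add, inner_conj_symm, inner_conj_symm, map_zero] at h0'
      rw [inner_neg_right] at h0'
      linear_combination -h0'
    · intro hcond y hy
      rw [hGperp] at hy
      obtain ⟨hy1, hy2⟩ := hy
      have hthis := hcond (-y.snd) hy1
      rw [hy2, inner_neg_right] at hthis
      have h' := congrArg conj hthis
      rw [map_neg, inner_conj_symm, inner_conj_symm] at h'
      rw [WithLp.prod_inner_apply, WithLp.equiv_symm_apply]
      simp only [WithLp.ofLp_toLp, WithLp.ofLp_fst, WithLp.ofLp_snd]
      linear_combination -h'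
  -- assembly
  have hdomSC : ∀ f ∈ domS ξ, f ∈ domC ξ := by
    intro f hf
    have hlim := hS f hf
    have h1 : Tendsto (fun k : ℕ => ⟪f, ∑ n ∈ Finset.range k, ⟪ξ n, f⟫_ℂ • ξ n⟫_ℂ) atTop
        (𝓝 ⟪f, Sfun f⟫_ℂ) := tendsto_const_nhds.inner hlim
    have h2 : (fun k : ℕ => ⟪f, ∑ n ∈ Finset.range k, ⟪ξ n, f⟫_ℂ • ξ n⟫_ℂ)
        = fun k : ℕ => ((∑ n ∈ Finset.range k, ‖⟪ξ n, f⟫_ℂ‖ ^ 2 : ℝ) : ℂ) := by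
      funext k
      rw [inner_sum]
      push_cast
      refine Finset.sum_congr rfl fun n _ => ?_
      rw [inner_smul_right]
      calc ⟪ξ n, f⟫_ℂ * ⟪f, ξ n⟫_ℂ = ⟪ξ n, f⟫_ℂ * conj ⟪ξ n, f⟫_ℂ := by rw [inner_conj_symm]
        _ = ((‖⟪ξ n, f⟫_ℂ‖ : ℂ)) ^ 2 := by rw [Complex.mul_conj']
    rw [h2] at h1
    have h3 : Tendsto (fun k : ℕ => ∑ n ∈ Finset.range k, ‖⟪ξ n, f⟫_ℂ‖ ^ 2) atTop
        (𝓝 (Complex.re ⟪f, Sfun f⟫_ℂ)) := by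
      have h4 : (fun k : ℕ => ∑ n ∈ Finset.range k, ‖⟪ξ n, f⟫_ℂ‖ ^ 2)
          = fun k : ℕ => Complex.re (((∑ n ∈ Finset.range k, ‖⟪ξ n, f⟫_ℂ‖ ^ 2 : ℝ) : ℂ)) := by
        funext k; rw [Complex.ofReal_re]
      rw [h4]
      exact (Complex.continuous_re.tendsto _).comp h1
    have hmono : Monotone (fun k : ℕ => ∑ n ∈ Finset.range k, ‖⟪ξ n, f⟫_ℂ‖ ^ 2) := by
      intro a b hab
      exact Finset.sum_le_sum_of_subset_of_nonneg (Finset.range_subset_range.2 hab)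
        (fun n _ _ => by positivity)
    have hbound := hmono.ge_of_tendsto h3
    have hsummable : Summable (fun n => ‖⟪ξ n, f⟫_ℂ‖ ^ 2) :=
      summable_of_sum_range_le (fun n => by positivity) hbound
    show Memℓp _ 2
    apply memℓp_gen
    have hre : ∀ x : ℂ, ‖x‖ ^ (2 : ℝ≥0∞).toReal = ‖x‖ ^ 2 := fun x => by
      norm_num
    simp only [hre]
    exact hsummable
  have hCpart : ∀ f ∈ domC ξ, (fun k : ℕ => ∑ n ∈ Finset.range k, (Cfun ξ f) n • ξ n)
      = fun k : ℕ => ∑ n ∈ Finset.range k, ⟪ξ n, f⟫_ℂ • ξ n := by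
    intro f hf
    funext k
    exact Finset.sum_congr rfl fun n _ => by rw [Cfun_apply hf]
  refine ⟨hI, hclosedC, fun _ => hII, ?_, ?_, ?_, ?_⟩
  -- (iii)
  · constructor
    · intro hcl
      rw [dense_domC_iff]
      intro L hL
      apply hcl L
      exact (hGclos ((0 : l2), L)).2 (fun f hf => by rw [hL f hf]; simp)
    · intro hd L hmem
      have hLf := (hGclos ((0 : l2), L)).1 hmem
      exact (dense_domC_iff ξ).1 hd L (fun f hf => by simpa using hLf f hf)
  -- (iv)
  · constructor
    · intro hclosed
      have hcleq : closure {p : l2 × H | p.1 ∈ domD ξ ∧ Dfun p.1 = p.2}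
          = {p : l2 × H | p.1 ∈ domD ξ ∧ Dfun p.1 = p.2} := hclosed.closure_eq
      have hdense : Dense (domC ξ) := by
        rw [dense_domC_iff]
        intro L hL
        have hmem : ((0 : l2), L) ∈ closure {p : l2 × H | p.1 ∈ domD ξ ∧ Dfun p.1 = p.2} :=
          (hGclos _).2 (fun f hf => by rw [hL f hf]; simp)
        rw [hcleq] at hmem
        exact hmem.2.symm.trans hDzero
      refine ⟨hdense, fun c L => ⟨?_, ?_⟩⟩
      · rintro ⟨hc, rfl⟩
        exact (hGclos (c, Dfun c)).1 (subset_closure ⟨hc, rfl⟩)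
      · intro hcf
        have hmem := (hGclos (c, L)).2 hcf
        rw [hcleq] at hmem
        exact hmem
    · rintro ⟨hd, hiff⟩
      have hset : {p : l2 × H | p.1 ∈ domD ξ ∧ Dfun p.1 = p.2}
          = ⋂ f ∈ domC ξ, {p : l2 × H | ⟪p.2, f⟫_ℂ = ⟪p.1, Cfun ξ f⟫_ℂ} := by
        ext p
        simp only [Set.mem_iInter, Set.mem_setOf_eq]
        exact hiff p.1 p.2
      rw [hset]
      exact isClosed_biInter fun f _ =>
        isClosed_eq (continuous_snd.inner continuous_const) (continuous_fst.inner continuous_const)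
  -- (v) domains
  · ext f
    constructor
    · intro hf
      have hfC := hdomSC f hf
      refine ⟨hfC, ⟨Sfun f, ?_⟩⟩
      rw [hCpart f hfC]
      exact hS f hf
    · rintro ⟨hfC, LL, hLL⟩
      rw [hCpart f hfC] at hLL
      exact ⟨LL, hLL⟩
  -- (v) values
  · intro f hf
    have hfC := hdomSC f hf
    have h1 : Tendsto (fun k : ℕ => ∑ n ∈ Finset.range k, (Cfun ξ f) n • ξ n) atTop
        (𝓝 (Sfun f)) := by
      rw [hCpart f hfC]
      exact hS f hf
    exact (hDu h1).symm
end
end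

section
/- Let ξ = (ξ_n)_{n∈ℕ} be a lower semi-frame of H. Then the sequence (T_ξ^{-1}Pξ_n)_{n∈ℕ} is a Bessel sequence of H (indeed Σ_{n∈ℕ} |⟨f, T_ξ^{-1}Pξ_n⟩|² ≤ ∥T_ξ^{-1/2}∥²∥f∥² for all f ∈ H), and for every g ∈ D(C_ξ) one has the reconstruction formula g = Σ_{n∈ℕ} ⟨g,ξ_n⟩ T_ξ^{-1}Pξ_n, the series converging unconditionally in the norm of H. -/
noncomputable section
open scoped InnerProductSpace ComplexInnerProductSpace ComplexConjugate ENNReal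
open Filter Topology

/- `H` is a separable complex Hilbert space. -/
variable {H : Type} [NormedAddCommGroup H] [InnerProductSpace ℂ H] [CompleteSpace H]
  [TopologicalSpace.SeparableSpace H]

/-- Let `ξ` be a lower semi-frame of `H`.  Let `P` be the orthogonal
projection of `H` onto `H_ξ = closure D(C_ξ)` and let `Tinv` be the (bounded) inverse of the
generalized frame operator `T_ξ`, characterized by `Tinv h ∈ D(T_ξ)` and `T_ξ (Tinv h) = h`
for `h ∈ H_ξ` (the latter expressed through the sesquilinear form).  Then
`(T_ξ⁻¹ P ξ_n)_n` is a Bessel sequence of `H`, and for every `g ∈ D(C_ξ)` one has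
`g = Σ_n ⟨g,ξ_n⟩ T_ξ⁻¹ P ξ_n` with unconditional norm convergence (`HasSum`). -/
theorem statement2 (ξ : ℕ → H) (A : ℝ) (hA : 0 < A)
    (hlow : ∀ f : H, ENNReal.ofReal (A * ‖f‖ ^ 2) ≤ ∑' n : ℕ, ((‖⟪ξ n, f⟫_ℂ‖₊ : ℝ≥0∞) ^ 2))
    (P : H → H)
    (hP : ∀ x : H, P x ∈ closure (domC ξ) ∧ ∀ z ∈ closure (domC ξ), ⟪z, x - P x⟫_ℂ = 0)
    (Tinv : H → H)
    (hTinv : ∀ h ∈ closure (domC ξ), Tinv h ∈ domT ξ ∧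
      ∀ g ∈ domC ξ, ∑' n : ℕ, ⟪ξ n, Tinv h⟫_ℂ * ⟪g, ξ n⟫_ℂ = ⟪g, h⟫_ℂ) :
    (∃ B > (0 : ℝ), ∀ f : H,
        ∑' n : ℕ, ((‖⟪Tinv (P (ξ n)), f⟫_ℂ‖₊ : ℝ≥0∞) ^ 2) ≤ ENNReal.ofReal (B * ‖f‖ ^ 2))
    ∧ ∀ g ∈ domC ξ, HasSum (fun n : ℕ => ⟪ξ n, g⟫_ℂ • Tinv (P (ξ n))) g := by
  classical
  -- Basic memberships
  have hmemC : ∀ h ∈ closure (domC ξ), Tinv h ∈ domC ξ := fun h hh => ((hTinv h hh).1).1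
  have hclos : ∀ h ∈ closure (domC ξ), Tinv h ∈ closure (domC ξ) :=
    fun h hh => subset_closure (hmemC h hh)
  -- Symmetry of Tinv on the closure of the domain
  have hsym : ∀ a ∈ closure (domC ξ), ∀ b ∈ closure (domC ξ),
      ⟪Tinv a, b⟫_ℂ = ⟪a, Tinv b⟫_ℂ := by
    intro a ha b hb
    have e1 := (hTinv b hb).2 (Tinv a) (hmemC a ha)
    have e2 := (hTinv a ha).2 (Tinv b) (hmemC b hb)
    have hst : ⟪Tinv a, b⟫_ℂ = star ⟪Tinv b, a⟫_ℂ := by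
      rw [← e1, ← e2, tsum_star]
      refine tsum_congr fun n => ?_
      rw [star_mul']
      simp only [Complex.star_def, inner_conj_symm]
      ring
    rw [hst, Complex.star_def, inner_conj_symm]
  -- Key identity : ⟪Tinv (P ξₙ), f⟫ = ⟪ξₙ, Tinv (P f)⟫
  have hkey : ∀ (f : H) (n : ℕ), ⟪Tinv (P (ξ n)), f⟫_ℂ = ⟪ξ n, Tinv (P f)⟫_ℂ := by
    intro f n
    have hPn := hP (ξ n); have hPf := hP f
    have h1 : ⟪Tinv (P (ξ n)), f⟫_ℂ = ⟪Tinv (P (ξ n)), P f⟫_ℂ := by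
      have h0 := hPf.2 (Tinv (P (ξ n))) (hclos _ hPn.1)
      rw [inner_sub_right] at h0
      exact sub_eq_zero.mp h0
    have h2 : ⟪Tinv (P (ξ n)), P f⟫_ℂ = ⟪P (ξ n), Tinv (P f)⟫_ℂ := hsym _ hPn.1 _ hPf.1
    have h3 : ⟪P (ξ n), Tinv (P f)⟫_ℂ = ⟪ξ n, Tinv (P f)⟫_ℂ := by
      have h0 := hPn.2 (Tinv (P f)) (hclos _ hPf.1)
      have h0' : ⟪ξ n - P (ξ n), Tinv (P f)⟫_ℂ = 0 := by
        rw [← inner_conj_symm, h0, map_zero]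
      rw [inner_sub_left] at h0'
      exact (sub_eq_zero.mp h0').symm
    rw [h1, h2, h3]
  -- Summability of the coefficient series for elements of domC
  have hsummable : ∀ v ∈ domC ξ, Summable (fun n => ‖⟪ξ n, v⟫_ℂ‖ ^ 2) := by
    intro v hv
    have h2 : (0 : ℝ) < (2 : ℝ≥0∞).toReal := by norm_num
    have h3 := (memℓp_gen_iff h2).mp hv
    have heq : (fun n => ‖⟪ξ n, v⟫_ℂ‖ ^ (2 : ℝ≥0∞).toReal)
        = fun n => ‖⟪ξ n, v⟫_ℂ‖ ^ (2 : ℕ) := by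
      funext n
      rw [show ((2 : ℝ≥0∞).toReal) = ((2 : ℕ) : ℝ) by norm_num, Real.rpow_natCast]
    rwa [heq] at h3
  -- ‖P x‖ ≤ ‖x‖
  have hPle : ∀ x : H, ‖P x‖ ≤ ‖x‖ := by
    intro x
    have h0 := (hP x).2 (P x) (hP x).1
    rw [inner_sub_right] at h0
    have h1 : ⟪P x, x⟫_ℂ = ⟪P x, P x⟫_ℂ := sub_eq_zero.mp h0
    have h2 : ‖P x‖ ^ 2 = RCLike.re ⟪P x, x⟫_ℂ := by
      rw [h1]; exact (inner_self_eq_norm_sq (P x)).symm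
    have h3 : RCLike.re ⟪P x, x⟫_ℂ ≤ ‖P x‖ * ‖x‖ :=
      le_trans (RCLike.re_le_norm _) (norm_inner_le_norm _ _)
    nlinarith [norm_nonneg (P x), norm_nonneg x]
  -- Main estimate for u = Tinv (P f)
  have hmain : ∀ f : H, Summable (fun n => ‖⟪ξ n, Tinv (P f)⟫_ℂ‖ ^ 2) ∧
      (∑' n, ‖⟪ξ n, Tinv (P f)⟫_ℂ‖ ^ 2) ≤ A⁻¹ * ‖f‖ ^ 2 := by
    intro f
    have humem : Tinv (P f) ∈ domC ξ := hmemC _ (hP f).1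
    set u := Tinv (P f) with hu
    have hsum : Summable (fun n => ‖⟪ξ n, u⟫_ℂ‖ ^ 2) := hsummable u humem
    refine ⟨hsum, ?_⟩
    have hrel := (hTinv (P f) (hP f).1).2 u humem
    have hterm : ∀ n : ℕ, ⟪ξ n, u⟫_ℂ * ⟪u, ξ n⟫_ℂ = ((‖⟪ξ n, u⟫_ℂ‖ ^ 2 : ℝ) : ℂ) := by
      intro n
      rw [← inner_conj_symm u (ξ n), RCLike.mul_conj]
      norm_cast
    set S : ℝ := ∑' n, ‖⟪ξ n, u⟫_ℂ‖ ^ 2 with hS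
    have hSnonneg : (0 : ℝ) ≤ S := tsum_nonneg fun n => sq_nonneg _
    have hofreal : ((S : ℝ) : ℂ) = ⟪u, P f⟫_ℂ := by
      calc ((S : ℝ) : ℂ) = Complex.ofRealCLM S := rfl
        _ = ∑' n, Complex.ofRealCLM (‖⟪ξ n, u⟫_ℂ‖ ^ 2) := Complex.ofRealCLM.map_tsum hsum
        _ = ∑' n, ⟪ξ n, u⟫_ℂ * ⟪u, ξ n⟫_ℂ := tsum_congr fun n => (hterm n).symm
        _ = ⟪u, P f⟫_ℂ := hrel
    have hSle : S ≤ ‖u‖ * ‖f‖ := by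
      have h1 : S = RCLike.re ⟪u, P f⟫_ℂ := by
        rw [← hofreal]; simp
      have h2 : RCLike.re ⟪u, P f⟫_ℂ ≤ ‖u‖ * ‖P f‖ :=
        le_trans (RCLike.re_le_norm _) (norm_inner_le_norm _ _)
      have h3 : ‖u‖ * ‖P f‖ ≤ ‖u‖ * ‖f‖ :=
        mul_le_mul_of_nonneg_left (hPle f) (norm_nonneg u)
      linarith
    have hAS : A * ‖u‖ ^ 2 ≤ S := by
      have hENN : (∑' n : ℕ, ((‖⟪ξ n, u⟫_ℂ‖₊ : ℝ≥0∞) ^ 2)) = ENNReal.ofReal S := by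
        rw [hS, ENNReal.ofReal_tsum_of_nonneg (fun n => sq_nonneg _) hsum]
        refine tsum_congr fun n => ?_
        rw [ENNReal.ofReal_pow (norm_nonneg _), ofReal_norm, enorm_eq_nnnorm]
      have h4 := hlow u
      rw [hENN] at h4
      exact (ENNReal.ofReal_le_ofReal_iff hSnonneg).mp h4
    have hASF : A * S ≤ ‖f‖ ^ 2 := by
      nlinarith [mul_le_mul_of_nonneg_left hSle hA.le, mul_le_mul_of_nonneg_left hAS hA.le,
        sq_nonneg (‖f‖ - A * ‖u‖)]
    calc S = A⁻¹ * (A * S) := by field_simp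
      _ ≤ A⁻¹ * ‖f‖ ^ 2 := mul_le_mul_of_nonneg_left hASF (inv_pos.mpr hA).le
  -- The Bessel bound, finite-sum version
  have hbesselFin : ∀ (f : H) (s : Finset ℕ),
      ∑ n ∈ s, ‖⟪Tinv (P (ξ n)), f⟫_ℂ‖ ^ 2 ≤ A⁻¹ * ‖f‖ ^ 2 := by
    intro f s
    calc ∑ n ∈ s, ‖⟪Tinv (P (ξ n)), f⟫_ℂ‖ ^ 2
        = ∑ n ∈ s, ‖⟪ξ n, Tinv (P f)⟫_ℂ‖ ^ 2 := by
          refine Finset.sum_congr rfl fun n _ => ?_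
          rw [hkey f n]
      _ ≤ ∑' n, ‖⟪ξ n, Tinv (P f)⟫_ℂ‖ ^ 2 :=
          Summable.sum_le_tsum s (fun n _ => sq_nonneg _) (hmain f).1
      _ ≤ A⁻¹ * ‖f‖ ^ 2 := (hmain f).2
  constructor
  · -- Bessel bound
    refine ⟨A⁻¹, inv_pos.mpr hA, fun f => ?_⟩
    have heq : (∑' n : ℕ, ((‖⟪Tinv (P (ξ n)), f⟫_ℂ‖₊ : ℝ≥0∞) ^ 2))
        = ∑' n : ℕ, ((‖⟪ξ n, Tinv (P f)⟫_ℂ‖₊ : ℝ≥0∞) ^ 2) := by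
      refine tsum_congr fun n => ?_
      rw [hkey f n]
    have hENN : (∑' n : ℕ, ((‖⟪ξ n, Tinv (P f)⟫_ℂ‖₊ : ℝ≥0∞) ^ 2))
        = ENNReal.ofReal (∑' n, ‖⟪ξ n, Tinv (P f)⟫_ℂ‖ ^ 2) := by
      rw [ENNReal.ofReal_tsum_of_nonneg (fun n => sq_nonneg _) (hmain f).1]
      refine tsum_congr fun n => ?_
      rw [ENNReal.ofReal_pow (norm_nonneg _), ofReal_norm, enorm_eq_nnnorm]
    rw [heq, hENN]
    exact ENNReal.ofReal_le_ofReal (hmain f).2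
  · -- Reconstruction formula
    intro g hg
    have hgsum : Summable (fun n => ‖⟪ξ n, g⟫_ℂ‖ ^ 2) := hsummable g hg
    have hSummable : Summable (fun n => ⟪ξ n, g⟫_ℂ • Tinv (P (ξ n))) := by
      rw [summable_iff_vanishing_norm]
      intro ε hε
      obtain ⟨s, hs⟩ := summable_iff_vanishing_norm.mp hgsum (A * ε ^ 2 / 2)
        (by positivity)
      refine ⟨s, fun t ht => ?_⟩
      set v : H := ∑ n ∈ t, ⟪ξ n, g⟫_ℂ • Tinv (P (ξ n)) with hv
      have hδ : ∑ n ∈ t, ‖⟪ξ n, g⟫_ℂ‖ ^ 2 < A * ε ^ 2 / 2 := by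
        have h0 := hs t ht
        have h1 : ∑ n ∈ t, ‖⟪ξ n, g⟫_ℂ‖ ^ 2 ≤ ‖∑ n ∈ t, ‖⟪ξ n, g⟫_ℂ‖ ^ 2‖ :=
          le_abs_self _
        linarith
      have hv2 : ‖v‖ ^ 2 ≤ ∑ n ∈ t, ‖⟪ξ n, g⟫_ℂ‖ * ‖⟪Tinv (P (ξ n)), v⟫_ℂ‖ := by
        have h2 : ⟪v, v⟫_ℂ = ∑ n ∈ t, (starRingEnd ℂ) (⟪ξ n, g⟫_ℂ) * ⟪Tinv (P (ξ n)), v⟫_ℂ := by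
          rw [hv, sum_inner]
          exact Finset.sum_congr rfl fun n _ => inner_smul_left _ _ _
        calc ‖v‖ ^ 2 = RCLike.re ⟪v, v⟫_ℂ := (inner_self_eq_norm_sq v).symm
          _ ≤ ‖⟪v, v⟫_ℂ‖ := RCLike.re_le_norm _
          _ = ‖∑ n ∈ t, (starRingEnd ℂ) (⟪ξ n, g⟫_ℂ) * ⟪Tinv (P (ξ n)), v⟫_ℂ‖ := by rw [h2]
          _ ≤ ∑ n ∈ t, ‖(starRingEnd ℂ) (⟪ξ n, g⟫_ℂ) * ⟪Tinv (P (ξ n)), v⟫_ℂ‖ :=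
              norm_sum_le _ _
          _ = ∑ n ∈ t, ‖⟪ξ n, g⟫_ℂ‖ * ‖⟪Tinv (P (ξ n)), v⟫_ℂ‖ := by
              refine Finset.sum_congr rfl fun n _ => ?_
              rw [norm_mul, RCLike.norm_conj]
      have hcs := Finset.sum_mul_sq_le_sq_mul_sq t (fun n => ‖⟪ξ n, g⟫_ℂ‖)
        (fun n => ‖⟪Tinv (P (ξ n)), v⟫_ℂ‖)
      have hB := hbesselFin v t
      have hv4 : (‖v‖ ^ 2) ^ 2 ≤ (∑ n ∈ t, ‖⟪ξ n, g⟫_ℂ‖ ^ 2) *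
          (∑ n ∈ t, ‖⟪Tinv (P (ξ n)), v⟫_ℂ‖ ^ 2) := by
        refine le_trans (pow_le_pow_left₀ (sq_nonneg _) hv2 2) ?_
        exact hcs
      have hsq2 : (0 : ℝ) ≤ ∑ n ∈ t, ‖⟪Tinv (P (ξ n)), v⟫_ℂ‖ ^ 2 :=
        Finset.sum_nonneg fun n _ => sq_nonneg _
      have hvnorm : ‖v‖ ^ 2 ≤ ε ^ 2 / 2 := by
        by_cases hv0 : ‖v‖ = 0
        · rw [hv0]; norm_num; positivity
        · have hvpos : (0 : ℝ) < ‖v‖ := lt_of_le_of_ne (norm_nonneg v) (Ne.symm hv0)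
          have h5 : (‖v‖ ^ 2) ^ 2 ≤ (A * ε ^ 2 / 2) * (A⁻¹ * ‖v‖ ^ 2) :=
            le_trans hv4 (mul_le_mul hδ.le hB hsq2 (by positivity))
          have h6 : (A * ε ^ 2 / 2) * A⁻¹ = ε ^ 2 / 2 := by
            field_simp
          nlinarith [mul_pos hvpos hvpos]
      have hlt : ‖v‖ ^ 2 < ε ^ 2 := lt_of_le_of_lt hvnorm (by nlinarith)
      exact lt_of_pow_lt_pow_left₀ 2 hε.le hlt
    obtain ⟨L, hL⟩ := hSummable
    have hLg : L = g := by
      refine ext_inner_left ℂ fun f => ?_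
      have humem : Tinv (P f) ∈ domC ξ := hmemC _ (hP f).1
      have hmap : HasSum (fun n => ⟪ξ n, g⟫_ℂ * ⟪f, Tinv (P (ξ n))⟫_ℂ) ⟪f, L⟫_ℂ := by
        have h0 := hL.mapL (innerSL ℂ f)
        simpa only [innerSL_apply_apply, inner_smul_right] using h0
      have hfeta : ∀ n : ℕ, ⟪f, Tinv (P (ξ n))⟫_ℂ = ⟪Tinv (P f), ξ n⟫_ℂ := by
        intro n
        rw [← inner_conj_symm f (Tinv (P (ξ n))), hkey f n, inner_conj_symm]
      have h4 : ∑' n, ⟪ξ n, g⟫_ℂ * ⟪f, Tinv (P (ξ n))⟫_ℂ = ⟪P f, g⟫_ℂ := by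
        have hrelg := (hTinv (P f) (hP f).1).2 g hg
        calc ∑' n, ⟪ξ n, g⟫_ℂ * ⟪f, Tinv (P (ξ n))⟫_ℂ
            = ∑' n, star (⟪ξ n, Tinv (P f)⟫_ℂ * ⟪g, ξ n⟫_ℂ) := by
              refine tsum_congr fun n => ?_
              rw [star_mul', hfeta n]
              simp only [Complex.star_def, inner_conj_symm]
              ring
          _ = star (∑' n, ⟪ξ n, Tinv (P f)⟫_ℂ * ⟪g, ξ n⟫_ℂ) := tsum_star.symm
          _ = star ⟪g, P f⟫_ℂ := by rw [hrelg]
          _ = ⟪P f, g⟫_ℂ := by rw [Complex.star_def, inner_conj_symm]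
      have h5 : ⟪P f, g⟫_ℂ = ⟪f, g⟫_ℂ := by
        have h0 := (hP f).2 g (subset_closure hg)
        have h0' : ⟪f - P f, g⟫_ℂ = 0 := by
          rw [← inner_conj_symm, h0, map_zero]
        rw [inner_sub_left] at h0'
        exact (sub_eq_zero.mp h0').symm
      rw [hmap.tsum_eq] at h4
      rw [h4, h5]
    rwa [hLg] at hL
end
end

section
/- Let ξ = (ξ_n)_{n∈ℕ} be a lower semi-frame of H. Let Y : ℓ²(ℕ) → H_ξ be the unique bounded operator such that Y c = C_ξ^{-1} c for c ∈ R(C_ξ) and Y c = 0 for c ∈ R(C_ξ)^⊥, and set η_n := Y e_n, where (e_n)_{n∈ℕ} is the canonical orthonormal basis of ℓ²(ℕ). Then η_n = T_ξ^{-1} P ξ_n for every n ∈ ℕ. -/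
noncomputable section
open scoped InnerProductSpace ComplexInnerProductSpace ComplexConjugate ENNReal
open Filter Topology

/- `H` is a separable complex Hilbert space. -/
variable {H : Type} [NormedAddCommGroup H] [InnerProductSpace ℂ H] [CompleteSpace H]
  [TopologicalSpace.SeparableSpace H]

/-- Let `ξ` be a lower semi-frame of `H`, `P` the orthogonal projection onto
`H_ξ = closure D(C_ξ)`, `Tinv` the bounded inverse of the generalized frame operator, and let
`Y : ℓ² → H` be the unique bounded operator with `Y (C_ξ f) = f` for `f ∈ D(C_ξ)` (i.e.
`Y = C_ξ⁻¹` on `R(C_ξ)`) and `Y c = 0` for `c ⊥ R(C_ξ)`.  With `η_n := Y e_n`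
(`e_n` the canonical orthonormal basis of `ℓ²`), one has `η_n = T_ξ⁻¹ P ξ_n` for every `n`. -/
theorem statement3 (ξ : ℕ → H) (A : ℝ) (hA : 0 < A)
    (hlow : ∀ f : H, ENNReal.ofReal (A * ‖f‖ ^ 2) ≤ ∑' n : ℕ, ((‖⟪ξ n, f⟫_ℂ‖₊ : ℝ≥0∞) ^ 2))
    (P : H → H)
    (hP : ∀ x : H, P x ∈ closure (domC ξ) ∧ ∀ z ∈ closure (domC ξ), ⟪z, x - P x⟫_ℂ = 0)
    (Tinv : H → H)
    (hTinv : ∀ h ∈ closure (domC ξ), Tinv h ∈ domT ξ ∧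
      ∀ g ∈ domC ξ, ∑' n : ℕ, ⟪ξ n, Tinv h⟫_ℂ * ⟪g, ξ n⟫_ℂ = ⟪g, h⟫_ℂ)
    (Y : l2 →L[ℂ] H)
    (hY1 : ∀ f ∈ domC ξ, Y (Cfun ξ f) = f)
    (hY2 : ∀ c : l2, (∀ f ∈ domC ξ, ⟪Cfun ξ f, c⟫_ℂ = 0) → Y c = 0) :
    ∀ n : ℕ, Y (lp.single 2 n (1 : ℂ)) = Tinv (P (ξ n)) := by
  intro n
  obtain ⟨hPmem, hPorth⟩ := hP (ξ n)
  obtain ⟨hT1, hu⟩ := hTinv (P (ξ n)) hPmem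
  have huC : Tinv (P (ξ n)) ∈ domC ξ := hT1.1
  set u := Tinv (P (ξ n)) with hu_def
  have hCg : ∀ g (hg : g ∈ domC ξ) (k : ℕ), (Cfun ξ g : ∀ _ : ℕ, ℂ) k = ⟪ξ k, g⟫_ℂ := by
    intro g hg k
    unfold Cfun
    rw [dif_pos (show Memℓp (fun m => ⟪ξ m, g⟫_ℂ) 2 from hg)]
  have hkey : ∀ g ∈ domC ξ, ⟪Cfun ξ g, (lp.single 2 n (1 : ℂ) - Cfun ξ u : l2)⟫_ℂ = 0 := by
    intro g hg
    rw [inner_sub_right]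
    have h1 : ⟪Cfun ξ g, (lp.single 2 n (1 : ℂ) : l2)⟫_ℂ = ⟪g, ξ n⟫_ℂ := by
      rw [lp.inner_eq_tsum]
      have : ∀ k : ℕ, ⟪(Cfun ξ g : ∀ _ : ℕ, ℂ) k, (lp.single 2 n (1 : ℂ) : l2) k⟫_ℂ
          = if k = n then ⟪g, ξ n⟫_ℂ else 0 := by
        intro k
        by_cases hk : k = n
        · subst hk
          rw [if_pos rfl, lp.single_apply_self, hCg g hg k, RCLike.inner_apply,
            one_mul, ← inner_conj_symm, Complex.conj_conj]
        · rw [if_neg hk, lp.single_apply_ne (E := fun _ : ℕ => ℂ) 2 n 1 hk,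
            inner_zero_right]
      rw [tsum_congr this, tsum_eq_single n (by intro b hb; rw [if_neg hb]), if_pos rfl]
    have h2 : ⟪Cfun ξ g, (Cfun ξ u : l2)⟫_ℂ = ⟪g, P (ξ n)⟫_ℂ := by
      rw [lp.inner_eq_tsum, ← hu g hg]
      apply tsum_congr
      intro k
      rw [hCg g hg k, hCg u huC k, RCLike.inner_apply,
        inner_conj_symm]
    have h3 : ⟪g, ξ n⟫_ℂ = ⟪g, P (ξ n)⟫_ℂ := by
      have := hPorth g (subset_closure hg)
      rw [inner_sub_right, sub_eq_zero] at this
      exact this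
    rw [h1, h2, h3, sub_self]
  have hz := hY2 _ hkey
  rw [map_sub, sub_eq_zero] at hz
  rw [hz, hY1 u huC]
end
end

section
/- Let ξ = (ξ_n)_{n∈ℕ} be a sequence in H whose synthesis operator D_ξ is closed. The following are equivalent: (1) ξ is a lower semi-frame of H; (2) there exists a Bessel sequence (η_n)_{n∈ℕ} in H such that f = Σ_{n∈ℕ} ⟨f,η_n⟩ξ_n for every f ∈ H; (3) R(D_ξ) = H, i.e. the synthesis operator is surjective. -/
noncomputable section
open scoped InnerProductSpace ComplexInnerProductSpace ComplexConjugate ENNReal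
open Filter Topology

/- `H` is a separable complex Hilbert space. -/
variable {H : Type} [NormedAddCommGroup H] [InnerProductSpace ℂ H] [CompleteSpace H]
  [TopologicalSpace.SeparableSpace H]

open scoped NNReal
set_option linter.unusedSectionVars false
set_option linter.deprecated false

namespace S5Aux

lemma memℓp_two_iff {g : ℕ → ℂ} : Memℓp g 2 ↔ Summable (fun n => ‖g n‖ ^ 2) := by
  rw [memℓp_gen_iff (by norm_num : 0 < (2 : ℝ≥0∞).toReal)]
  norm_num

lemma ennreal_tsum_sq_eq {g : ℕ → ℂ} (hg : Summable fun n => ‖g n‖ ^ 2) :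
    ∑' n : ℕ, ((‖g n‖₊ : ℝ≥0∞) ^ 2) = ENNReal.ofReal (∑' n : ℕ, ‖g n‖ ^ 2) := by
  rw [ENNReal.ofReal_tsum_of_nonneg (fun n => by positivity) hg]
  congr 1; funext n
  rw [ENNReal.ofReal_pow (norm_nonneg _), ← enorm_eq_nnnorm, ofReal_norm]

lemma summable_of_tsum_sq_ne_top {g : ℕ → ℂ}
    (h : ∑' n : ℕ, ((‖g n‖₊ : ℝ≥0∞) ^ 2) ≠ ⊤) : Summable (fun n => ‖g n‖ ^ 2) := by
  have h' : ∑' n : ℕ, (((‖g n‖₊ ^ 2 : ℝ≥0)) : ℝ≥0∞) ≠ ⊤ := by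
    simpa only [ENNReal.coe_pow] using h
  have hs : Summable (fun n => (‖g n‖₊ ^ 2 : ℝ≥0)) :=
    ENNReal.tsum_coe_ne_top_iff_summable.mp h'
  have h2 := NNReal.summable_coe.mpr hs
  simpa only [NNReal.coe_pow, coe_nnnorm] using h2

lemma lp_ennreal_sum (x : l2) :
    ∑' n : ℕ, ((‖x n‖₊ : ℝ≥0∞) ^ 2) = ENNReal.ofReal (‖x‖ ^ 2) := by
  have hsum : Summable (fun n => ‖x n‖ ^ 2) := memℓp_two_iff.mp (lp.memℓp x)
  rw [ennreal_tsum_sq_eq hsum]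
  congr 1
  have h2 := lp.norm_rpow_eq_tsum (by norm_num : 0 < (2 : ℝ≥0∞).toReal) x
  norm_num at h2
  rw [h2]

lemma inner_sum_smul (ξ : ℕ → H) (c : ℕ → ℂ) (b : H) (k : ℕ) :
    ⟪∑ n ∈ Finset.range k, c n • ξ n, b⟫_ℂ
      = ∑ n ∈ Finset.range k, conj (c n) * ⟪ξ n, b⟫_ℂ := by
  rw [sum_inner]
  simp [inner_smul_left]

lemma tendsto_pairing (ξ : ℕ → H) (c : l2) {b : H} (hb : b ∈ domC ξ) :
    Tendsto (fun k : ℕ => ⟪∑ n ∈ Finset.range k, c n • ξ n, b⟫_ℂ) atTop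
      (𝓝 ⟪c, (⟨_, hb⟩ : l2)⟫_ℂ) := by
  have h1 : HasSum (fun n : ℕ => ⟪c n, ((⟨_, hb⟩ : l2) : ∀ _ : ℕ, ℂ) n⟫_ℂ)
      ⟪c, (⟨_, hb⟩ : l2)⟫_ℂ := lp.hasSum_inner c _
  have h2 := h1.tendsto_sum_nat
  refine h2.congr fun k => ?_
  rw [inner_sum_smul]
  refine Finset.sum_congr rfl fun n _ => ?_
  exact (RCLike.inner_apply _ _).trans (mul_comm _ _)

lemma graph_inner (ξ : ℕ → H) {L : H}
    {c : l2} (hc : Tendsto (fun k : ℕ => ∑ n ∈ Finset.range k, c n • ξ n) atTop (𝓝 L))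
    {b : H} (hb : b ∈ domC ξ) :
    ⟪L, b⟫_ℂ = ⟪c, (⟨_, hb⟩ : l2)⟫_ℂ :=
  tendsto_nhds_unique (hc.inner tendsto_const_nhds) (tendsto_pairing ξ c hb)

lemma single_partial (ξ : ℕ → H) (n : ℕ) :
    Tendsto (fun k : ℕ => ∑ m ∈ Finset.range k, (lp.single 2 n (1:ℂ) : l2) m • ξ m)
      atTop (𝓝 (ξ n)) := by
  refine tendsto_const_nhds.congr' ?_
  filter_upwards [eventually_ge_atTop (n + 1)] with k hk
  rw [Finset.sum_eq_single n]
  · rw [lp.single_apply]; simp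
  · intro m _ hmn
    rw [lp.single_apply]
    simp [hmn]
  · intro hn
    exact absurd (Finset.mem_range.mpr (by omega)) hn

end S5Aux

namespace S5Aux

variable (ξ : ℕ → H) (Dfun : l2 → H)

/-- The graph of the synthesis operator as a submodule of `WithLp 2 (l2 × H)`. -/
def graphD
    (hD : ∀ c ∈ domD ξ,
      Tendsto (fun k : ℕ => ∑ n ∈ Finset.range k, c n • ξ n) atTop (𝓝 (Dfun c))) :
    Submodule ℂ (WithLp 2 (l2 × H)) where
  carrier := {p | p.fst ∈ domD ξ ∧ Dfun p.fst = p.snd}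
  zero_mem' := by
    have h0 : Tendsto (fun k : ℕ => ∑ n ∈ Finset.range k, ((0 : l2) : ∀ _ : ℕ, ℂ) n • ξ n)
        atTop (𝓝 (0 : H)) := by
      refine tendsto_const_nhds.congr fun k => ?_
      simp
    have hm : (0 : l2) ∈ domD ξ := ⟨0, h0⟩
    exact ⟨hm, tendsto_nhds_unique (hD 0 hm) h0⟩
  add_mem' := by
    rintro p q ⟨hp, hp2⟩ ⟨hq, hq2⟩
    have hsum : Tendsto (fun k : ℕ => ∑ n ∈ Finset.range k, ((p.fst + q.fst : l2) : ∀ _ : ℕ, ℂ) n • ξ n)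
        atTop (𝓝 (Dfun p.fst + Dfun q.fst)) := by
      have := (hD p.fst hp).add (hD q.fst hq)
      refine this.congr fun k => ?_
      rw [← Finset.sum_add_distrib]
      refine Finset.sum_congr rfl fun n _ => ?_
      rw [lp.coeFn_add, Pi.add_apply, add_smul]
    have hm : (p + q : WithLp 2 (l2 × H)).fst ∈ domD ξ := ⟨_, hsum⟩
    refine ⟨hm, ?_⟩
    have := tendsto_nhds_unique (hD _ hm) hsum
    rw [this, hp2, hq2]
    rfl
  smul_mem' := by
    rintro a p ⟨hp, hp2⟩
    have hsum : Tendsto (fun k : ℕ => ∑ n ∈ Finset.range k, ((a • p.fst : l2) : ∀ _ : ℕ, ℂ) n • ξ n)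
        atTop (𝓝 (a • Dfun p.fst)) := by
      have := (hD p.fst hp).const_smul a
      refine this.congr fun k => ?_
      rw [Finset.smul_sum]
      refine Finset.sum_congr rfl fun n _ => ?_
      rw [lp.coeFn_smul, Pi.smul_apply, smul_smul]
      rfl
    have hm : (a • p : WithLp 2 (l2 × H)).fst ∈ domD ξ := ⟨_, hsum⟩
    refine ⟨hm, ?_⟩
    have := tendsto_nhds_unique (hD _ hm) hsum
    rw [this, hp2]
    rfl

variable {ξ Dfun}

lemma graphD_closed (hD : ∀ c ∈ domD ξ,
      Tendsto (fun k : ℕ => ∑ n ∈ Finset.range k, c n • ξ n) atTop (𝓝 (Dfun c)))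
    (hDclosed : IsClosed {p : l2 × H | p.1 ∈ domD ξ ∧ Dfun p.1 = p.2}) :
    IsClosed ((graphD ξ Dfun hD : Submodule ℂ (WithLp 2 (l2 × H))) : Set (WithLp 2 (l2 × H))) :=
  hDclosed.preimage (WithLp.prodContinuousLinearEquiv 2 ℂ l2 H).continuous

lemma single_mem_graphD (hD : ∀ c ∈ domD ξ,
      Tendsto (fun k : ℕ => ∑ n ∈ Finset.range k, c n • ξ n) atTop (𝓝 (Dfun c))) (n : ℕ) :
    (lp.single 2 n (1:ℂ) : l2) ∈ domD ξ ∧ Dfun (lp.single 2 n (1:ℂ)) = ξ n := by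
  have h := single_partial ξ n
  have hm : (lp.single 2 n (1:ℂ) : l2) ∈ domD ξ := ⟨_, h⟩
  exact ⟨hm, tendsto_nhds_unique (hD _ hm) h⟩

lemma mem_graphD_orth (hD : ∀ c ∈ domD ξ,
      Tendsto (fun k : ℕ => ∑ n ∈ Finset.range k, c n • ξ n) atTop (𝓝 (Dfun c)))
    (q : WithLp 2 (l2 × H)) :
    q ∈ (graphD ξ Dfun hD)ᗮ ↔
      ∃ hb : q.snd ∈ domC ξ, q.fst = -(⟨_, hb⟩ : l2) := by
  constructor
  · intro hq
    have key : ∀ n, q.fst n = -⟪ξ n, q.snd⟫_ℂ := by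
      intro n
      have hs := single_mem_graphD hD (ξ := ξ) n
      have h0 := (Submodule.mem_orthogonal _ _).1 hq
        ((WithLp.equiv 2 (l2 × H)).symm (lp.single 2 n (1:ℂ), ξ n)) ⟨hs.1, hs.2⟩
      rw [WithLp.prod_inner_apply] at h0
      have h0' : ⟪(lp.single 2 n (1:ℂ) : l2), q.fst⟫_ℂ + ⟪ξ n, q.snd⟫_ℂ = 0 := h0
      have h1 : ⟪(lp.single 2 n (1:ℂ) : l2), q.fst⟫_ℂ = q.fst n := by
        rw [lp.inner_single_left, RCLike.inner_apply]
        simp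
      rw [h1] at h0'
      linear_combination h0'
    have hb : q.snd ∈ domC ξ := by
      have hneg := (lp.memℓp q.fst).neg
      have heq : (fun n => ⟪ξ n, q.snd⟫_ℂ) = -(q.fst : ∀ _ : ℕ, ℂ) := funext fun n => by
        rw [Pi.neg_apply, key n, neg_neg]
      show Memℓp (fun n => ⟪ξ n, q.snd⟫_ℂ) 2
      rw [heq]
      exact hneg
    refine ⟨hb, lp.ext (funext fun n => ?_)⟩
    rw [lp.coeFn_neg, Pi.neg_apply]
    exact key n
  · rintro ⟨hb, hq1⟩
    rw [Submodule.mem_orthogonal]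
    rintro u ⟨hu, hDu⟩
    rw [WithLp.prod_inner_apply, WithLp.ofLp_fst, WithLp.ofLp_fst, WithLp.ofLp_snd, WithLp.ofLp_snd, hq1, inner_neg_right]
    have := graph_inner ξ (hD u.fst hu) hb
    rw [hDu] at this
    rw [← this]
    ring

lemma weak_mem_graphD (hD : ∀ c ∈ domD ξ,
      Tendsto (fun k : ℕ => ∑ n ∈ Finset.range k, c n • ξ n) atTop (𝓝 (Dfun c)))
    (hDclosed : IsClosed {p : l2 × H | p.1 ∈ domD ξ ∧ Dfun p.1 = p.2})
    {c : l2} {h : H}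
    (hw : ∀ (b : H) (hb : b ∈ domC ξ), ⟪(⟨_, hb⟩ : l2), c⟫_ℂ = ⟪b, h⟫_ℂ) :
    c ∈ domD ξ ∧ Dfun c = h := by
  haveI : CompleteSpace (graphD ξ Dfun hD) := (graphD_closed hD hDclosed).completeSpace_coe
  have hGG : (graphD ξ Dfun hD)ᗮᗮ = graphD ξ Dfun hD :=
    Submodule.orthogonal_orthogonal _
  have hp : ((WithLp.equiv 2 (l2 × H)).symm (c, h)) ∈ (graphD ξ Dfun hD)ᗮᗮ := by
    rw [Submodule.mem_orthogonal]
    intro q hq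
    obtain ⟨hb, hq1⟩ := (mem_graphD_orth hD q).1 hq
    rw [WithLp.prod_inner_apply]
    show ⟪q.fst, c⟫_ℂ + ⟪q.snd, h⟫_ℂ = 0
    rw [hq1, inner_neg_left]
    have h2 : ⟪(⟨_, hb⟩ : l2), c⟫_ℂ = ⟪q.snd, h⟫_ℂ := hw q.snd hb
    rw [h2]
    ring
  rw [hGG] at hp
  exact hp

end S5Aux

namespace S5Aux

variable {ξ : ℕ → H} {Dfun : l2 → H}

/-- `D(C_ξ)` as a submodule. -/
def domCsub (ξ : ℕ → H) : Submodule ℂ H where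
  carrier := domC ξ
  zero_mem' := by
    show Memℓp (fun n => ⟪ξ n, (0:H)⟫_ℂ) 2
    have : (fun n : ℕ => ⟪ξ n, (0:H)⟫_ℂ) = 0 := funext fun n => by simp
    rw [this]
    exact zero_memℓp
  add_mem' := by
    intro a b ha hb
    show Memℓp (fun n => ⟪ξ n, a + b⟫_ℂ) 2
    have : (fun n : ℕ => ⟪ξ n, a + b⟫_ℂ)
        = (fun n : ℕ => ⟪ξ n, a⟫_ℂ) + (fun n : ℕ => ⟪ξ n, b⟫_ℂ) :=
      funext fun n => by simp [inner_add_right]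
    rw [this]
    exact ha.add hb
  smul_mem' := by
    intro a x hx
    show Memℓp (fun n => ⟪ξ n, a • x⟫_ℂ) 2
    have : (fun n : ℕ => ⟪ξ n, a • x⟫_ℂ) = a • (fun n : ℕ => ⟪ξ n, x⟫_ℂ) :=
      funext fun n => by simp [inner_smul_right]
    rw [this]
    exact hx.const_smul a

/-- The analysis operator as a linear map on its domain. -/
def CLmap (ξ : ℕ → H) : domCsub ξ →ₗ[ℂ] l2 where
  toFun b := ⟨fun n => ⟪ξ n, (b : H)⟫_ℂ, b.2⟩
  map_add' a b := by
    apply lp.ext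
    rw [lp.coeFn_add]
    funext n
    simp [inner_add_right]
  map_smul' a b := by
    apply lp.ext
    rw [lp.coeFn_smul]
    funext n
    simp [inner_smul_right]

lemma surj_of_lower (hD : ∀ c ∈ domD ξ,
      Tendsto (fun k : ℕ => ∑ n ∈ Finset.range k, c n • ξ n) atTop (𝓝 (Dfun c)))
    (hDclosed : IsClosed {p : l2 × H | p.1 ∈ domD ξ ∧ Dfun p.1 = p.2})
    {A : ℝ} (hA : 0 < A)
    (hlow : ∀ f : H,
      ENNReal.ofReal (A * ‖f‖ ^ 2) ≤ ∑' n : ℕ, ((‖⟪ξ n, f⟫_ℂ‖₊ : ℝ≥0∞) ^ 2))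
    (h : H) : ∃ c ∈ domD ξ, Dfun c = h := by
  have hsA : 0 < Real.sqrt A := Real.sqrt_pos.mpr hA
  -- lower bound for CLmap
  have hbound : ∀ b : domCsub ξ, Real.sqrt A * ‖b‖ ≤ ‖CLmap ξ b‖ := by
    intro b
    have h1 := hlow (b : H)
    rw [show (fun n : ℕ => ((‖⟪ξ n, (b : H)⟫_ℂ‖₊ : ℝ≥0∞) ^ 2))
        = (fun n : ℕ => ((‖(CLmap ξ b) n‖₊ : ℝ≥0∞) ^ 2)) from rfl] at h1
    rw [lp_ennreal_sum (CLmap ξ b)] at h1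
    have h2 : A * ‖(b : H)‖ ^ 2 ≤ ‖CLmap ξ b‖ ^ 2 :=
      (ENNReal.ofReal_le_ofReal_iff (by positivity)).mp h1
    have h3 := Real.sqrt_le_sqrt h2
    rw [Real.sqrt_mul hA.le, Real.sqrt_sq (norm_nonneg _), Real.sqrt_sq (norm_nonneg _)] at h3
    exact h3
  have hinj : Function.Injective (CLmap ξ) := by
    intro a b hab
    have : CLmap ξ (a - b) = 0 := by rw [map_sub, hab, sub_self]
    have h1 := hbound (a - b)
    rw [this, norm_zero] at h1
    have h2 : ‖a - b‖ ≤ 0 := by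
      nlinarith [norm_nonneg (a - b)]
    have : a - b = 0 := by
      rw [← norm_le_zero_iff]
      exact h2
    exact sub_eq_zero.mp this
  set eqv := LinearEquiv.ofInjective (CLmap ξ) hinj with heqv
  -- the functional on the range of CLmap
  set ψ₀ : LinearMap.range (CLmap ξ) →ₗ[ℂ] ℂ :=
    ((innerSL ℂ h).toLinearMap.comp ((domCsub ξ).subtype.comp eqv.symm.toLinearMap)) with hψ₀
  have hCLsymm : ∀ g : LinearMap.range (CLmap ξ), CLmap ξ (eqv.symm g) = (g : l2) := by
    intro g
    conv_rhs => rw [← eqv.apply_symm_apply g]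
    rw [LinearEquiv.ofInjective_apply]
  have hψbound : ∀ g : LinearMap.range (CLmap ξ), ‖ψ₀ g‖ ≤ (‖h‖ * (Real.sqrt A)⁻¹) * ‖g‖ := by
    intro g
    have h1 : ψ₀ g = ⟪h, ((eqv.symm g : domCsub ξ) : H)⟫_ℂ := rfl
    rw [h1]
    calc ‖⟪h, ((eqv.symm g : domCsub ξ) : H)⟫_ℂ‖
        ≤ ‖h‖ * ‖((eqv.symm g : domCsub ξ) : H)‖ := norm_inner_le_norm _ _
      _ ≤ ‖h‖ * ((Real.sqrt A)⁻¹ * ‖g‖) := by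
          refine mul_le_mul_of_nonneg_left ?_ (norm_nonneg h)
          have h2 := hbound (eqv.symm g)
          rw [hCLsymm g] at h2
          have h3 : ‖(eqv.symm g : domCsub ξ)‖ ≤ ‖(g : l2)‖ / Real.sqrt A :=
            (le_div_iff₀' hsA).mpr h2
          rw [div_eq_inv_mul] at h3
          exact h3
      _ = (‖h‖ * (Real.sqrt A)⁻¹) * ‖g‖ := by ring
  set ψ : LinearMap.range (CLmap ξ) →L[ℂ] ℂ :=
    LinearMap.mkContinuous ψ₀ (‖h‖ * (Real.sqrt A)⁻¹) hψbound with hψ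
  obtain ⟨φ, hφ, -⟩ := exists_extension_norm_eq (LinearMap.range (CLmap ξ)) ψ
  set c := (InnerProductSpace.toDual ℂ l2).symm φ with hc
  have hcg : ∀ g : l2, ⟪c, g⟫_ℂ = φ g := fun g => InnerProductSpace.toDual_symm_apply
  have hw : ∀ (b : H) (hb : b ∈ domC ξ), ⟪(⟨_, hb⟩ : l2), c⟫_ℂ = ⟪b, h⟫_ℂ := by
    intro b hb
    set bb : domCsub ξ := ⟨b, hb⟩ with hbb
    have hmem : (⟨_, hb⟩ : l2) = CLmap ξ bb := rfl
    have hrange : CLmap ξ bb ∈ LinearMap.range (CLmap ξ) := ⟨bb, rfl⟩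
    have h1 : ⟪c, CLmap ξ bb⟫_ℂ = φ (CLmap ξ bb) := hcg _
    have h2 : φ (CLmap ξ bb) = ψ ⟨CLmap ξ bb, hrange⟩ := hφ ⟨CLmap ξ bb, hrange⟩
    have h3 : ψ ⟨CLmap ξ bb, hrange⟩ = ⟪h, ((eqv.symm ⟨CLmap ξ bb, hrange⟩ : domCsub ξ) : H)⟫_ℂ := rfl
    have h4 : eqv.symm ⟨CLmap ξ bb, hrange⟩ = bb := by
      have : (⟨CLmap ξ bb, hrange⟩ : LinearMap.range (CLmap ξ)) = eqv bb := by
        apply Subtype.ext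
        rw [LinearEquiv.ofInjective_apply]
      rw [this, eqv.symm_apply_apply]
    have h5 : ⟪c, CLmap ξ bb⟫_ℂ = ⟪h, b⟫_ℂ := by
      rw [h1, h2, h3, h4]
    rw [hmem]
    calc ⟪CLmap ξ bb, c⟫_ℂ = conj ⟪c, CLmap ξ bb⟫_ℂ := (inner_conj_symm _ _).symm
      _ = conj ⟪h, b⟫_ℂ := by rw [h5]
      _ = ⟪b, h⟫_ℂ := inner_conj_symm _ _
  obtain ⟨hcd, hcD⟩ := weak_mem_graphD hD hDclosed hw
  exact ⟨c, hcd, hcD⟩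

end S5Aux

namespace S5Aux

variable {ξ : ℕ → H} {Dfun : l2 → H}

set_option maxHeartbeats 1000000 in
lemma bessel_dual (hD : ∀ c ∈ domD ξ,
      Tendsto (fun k : ℕ => ∑ n ∈ Finset.range k, c n • ξ n) atTop (𝓝 (Dfun c)))
    (hDclosed : IsClosed {p : l2 × H | p.1 ∈ domD ξ ∧ Dfun p.1 = p.2})
    (hsurj : ∀ h : H, ∃ c ∈ domD ξ, Dfun c = h) :
    ∃ η : ℕ → H,
      (∃ B > (0 : ℝ), ∀ f : H,
        ∑' n : ℕ, ((‖⟪η n, f⟫_ℂ‖₊ : ℝ≥0∞) ^ 2) ≤ ENNReal.ofReal (B * ‖f‖ ^ 2)) ∧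
      ∀ f : H, Tendsto (fun k : ℕ => ∑ n ∈ Finset.range k, ⟪η n, f⟫_ℂ • ξ n) atTop (𝓝 f) := by
  classical
  set V := WithLp 2 (l2 × H)
  set sndL : V →L[ℂ] H :=
    (ContinuousLinearMap.snd ℂ l2 H).comp
      (WithLp.prodContinuousLinearEquiv 2 ℂ l2 H).toContinuousLinearMap with hsndL
  set fstL : V →L[ℂ] l2 :=
    (ContinuousLinearMap.fst ℂ l2 H).comp
      (WithLp.prodContinuousLinearEquiv 2 ℂ l2 H).toContinuousLinearMap with hfstL
  set G : Submodule ℂ V := graphD ξ Dfun hD with hG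
  have hGclosed : IsClosed (G : Set V) := graphD_closed hD hDclosed
  set K : Submodule ℂ V := G ⊓ LinearMap.ker (sndL : V →ₗ[ℂ] H) with hK
  have hKclosed : IsClosed (K : Set V) := by
    have : (K : Set V) = (G : Set V) ∩ sndL ⁻¹' {0} := by
      ext x
      simp [hK, Set.mem_inter_iff, LinearMap.mem_ker]
    rw [this]
    exact hGclosed.inter (isClosed_singleton.preimage sndL.continuous)
  haveI : CompleteSpace K := hKclosed.completeSpace_coe
  set M : Submodule ℂ V := G ⊓ Kᗮ with hM
  have hMclosed : IsClosed (M : Set V) := by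
    have : (M : Set V) = (G : Set V) ∩ (Kᗮ : Set V) := by
      ext x; simp [hM]
    rw [this]
    exact hGclosed.inter K.isClosed_orthogonal
  haveI : CompleteSpace M := hMclosed.completeSpace_coe
  set fM : M →L[ℂ] H := sndL.comp M.subtypeL with hfM
  have hker : fM.ker = ⊥ := by
    rw [LinearMap.ker_eq_bot']
    intro m hm
    have hmG : (m : V) ∈ G := m.2.1
    have hmKo : (m : V) ∈ Kᗮ := m.2.2
    have hmK : (m : V) ∈ K := ⟨hmG, hm⟩
    have := (Submodule.mem_orthogonal K (m : V)).1 hmKo (m : V) hmK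
    have hm0 : (m : V) = 0 := by rwa [inner_self_eq_zero] at this
    exact Subtype.ext hm0
  have hrange : fM.range = ⊤ := by
    rw [LinearMap.range_eq_top]
    intro h
    obtain ⟨c, hc, hDc⟩ := hsurj h
    set p : V := (WithLp.equiv 2 (l2 × H)).symm (c, h) with hp
    have hpG : p ∈ G := ⟨hc, hDc⟩
    set k := K.orthogonalProjection p with hk
    have hkK : (k : V) ∈ K := k.2
    have hmG : p - (k : V) ∈ G := G.sub_mem hpG hkK.1
    have hmKo : p - (k : V) ∈ Kᗮ := K.sub_starProjection_mem_orthogonal p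
    refine ⟨⟨p - (k : V), hmG, hmKo⟩, ?_⟩
    have h1 : fM ⟨p - (k : V), hmG, hmKo⟩ = sndL p - sndL (k : V) := by
      simp [hfM]
    have h2 : sndL p = h := rfl
    have h3 : sndL (k : V) = 0 := hkK.2
    exact h1.trans (by rw [h2, h3, sub_zero])
  set e := ContinuousLinearEquiv.ofBijective fM hker hrange with he
  set R : H →L[ℂ] l2 := fstL.comp (M.subtypeL.comp (e.symm : H →L[ℂ] M)) with hR
  have hRmem : ∀ h : H, R h ∈ domD ξ ∧ Dfun (R h) = h := by
    intro h
    set x := e.symm h with hx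
    have hxG : (x : V) ∈ G := x.2.1
    have hfx : fM x = h := e.apply_symm_apply h
    have hRh : R h = (x : V).fst := rfl
    have hsnd : (x : V).snd = h := hfx
    refine ⟨by rw [hRh]; exact hxG.1, ?_⟩
    rw [hRh]
    rw [hxG.2]
    exact hsnd
  set η : ℕ → H := fun n => (ContinuousLinearMap.adjoint R) (lp.single 2 n (1:ℂ)) with hη
  have hηinner : ∀ (n : ℕ) (f : H), ⟪η n, f⟫_ℂ = (R f) n := by
    intro n f
    rw [hη]
    rw [ContinuousLinearMap.adjoint_inner_left]
    rw [lp.inner_single_left, RCLike.inner_apply]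
    simp
  refine ⟨η, ⟨‖R‖ ^ 2 + 1, by positivity, fun f => ?_⟩, fun f => ?_⟩
  · have h1 : (fun n : ℕ => ((‖⟪η n, f⟫_ℂ‖₊ : ℝ≥0∞) ^ 2))
        = fun n : ℕ => ((‖(R f) n‖₊ : ℝ≥0∞) ^ 2) := by
      funext n; rw [hηinner n f]
    rw [h1, lp_ennreal_sum (R f)]
    refine ENNReal.ofReal_le_ofReal ?_
    have h2 := R.le_opNorm f
    calc ‖R f‖ ^ 2 ≤ (‖R‖ * ‖f‖) ^ 2 := by
          exact pow_le_pow_left₀ (norm_nonneg _) h2 2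
      _ = ‖R‖ ^ 2 * ‖f‖ ^ 2 := by ring
      _ ≤ (‖R‖ ^ 2 + 1) * ‖f‖ ^ 2 := by
          have : (0:ℝ) ≤ ‖f‖ ^ 2 := by positivity
          nlinarith
  · obtain ⟨hmem, hval⟩ := hRmem f
    have := hD (R f) hmem
    rw [hval] at this
    refine this.congr fun k => ?_
    refine Finset.sum_congr rfl fun n _ => ?_
    rw [hηinner n f]

end S5Aux

namespace S5Aux

variable {ξ : ℕ → H}

lemma lower_of_bessel {η : ℕ → H} {B : ℝ} (hB : 0 < B)
    (hBessel : ∀ f : H,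
      ∑' n : ℕ, ((‖⟪η n, f⟫_ℂ‖₊ : ℝ≥0∞) ^ 2) ≤ ENNReal.ofReal (B * ‖f‖ ^ 2))
    (hrec : ∀ f : H,
      Tendsto (fun k : ℕ => ∑ n ∈ Finset.range k, ⟪η n, f⟫_ℂ • ξ n) atTop (𝓝 f))
    (f : H) :
    ENNReal.ofReal (B⁻¹ * ‖f‖ ^ 2) ≤ ∑' n : ℕ, ((‖⟪ξ n, f⟫_ℂ‖₊ : ℝ≥0∞) ^ 2) := by
  by_cases ht : ∑' n : ℕ, ((‖⟪ξ n, f⟫_ℂ‖₊ : ℝ≥0∞) ^ 2) = ⊤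
  · rw [ht]; exact le_top
  have hsum : Summable fun n : ℕ => ‖⟪ξ n, f⟫_ℂ‖ ^ 2 := summable_of_tsum_sq_ne_top ht
  set S : ℝ := ∑' n : ℕ, ‖⟪ξ n, f⟫_ℂ‖ ^ 2 with hSdef
  have hS0 : 0 ≤ S := tsum_nonneg fun n => by positivity
  rw [ennreal_tsum_sq_eq hsum]
  refine ENNReal.ofReal_le_ofReal ?_
  -- partial Bessel bound
  have hpartη : ∀ k : ℕ, ∑ n ∈ Finset.range k, ‖⟪η n, f⟫_ℂ‖ ^ 2 ≤ B * ‖f‖ ^ 2 := by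
    intro k
    have h1 : ∑ n ∈ Finset.range k, ((‖⟪η n, f⟫_ℂ‖₊ : ℝ≥0∞) ^ 2)
        ≤ ENNReal.ofReal (B * ‖f‖ ^ 2) := (ENNReal.sum_le_tsum _).trans (hBessel f)
    have h2 : ∑ n ∈ Finset.range k, ((‖⟪η n, f⟫_ℂ‖₊ : ℝ≥0∞) ^ 2)
        = ENNReal.ofReal (∑ n ∈ Finset.range k, ‖⟪η n, f⟫_ℂ‖ ^ 2) := by
      rw [ENNReal.ofReal_sum_of_nonneg fun n _ => by positivity]
      refine Finset.sum_congr rfl fun n _ => ?_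
      rw [ENNReal.ofReal_pow (norm_nonneg _), ← enorm_eq_nnnorm, ofReal_norm]
    rw [h2] at h1
    exact (ENNReal.ofReal_le_ofReal_iff (by positivity)).mp h1
  have hpartξ : ∀ k : ℕ, ∑ n ∈ Finset.range k, ‖⟪f, ξ n⟫_ℂ‖ ^ 2 ≤ S := by
    intro k
    have : ∀ n : ℕ, ‖⟪f, ξ n⟫_ℂ‖ ^ 2 = ‖⟪ξ n, f⟫_ℂ‖ ^ 2 := fun n => by
      rw [show ‖⟪f, ξ n⟫_ℂ‖ = ‖⟪ξ n, f⟫_ℂ‖ from @norm_inner_symm ℂ H _ _ _ f (ξ n)]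
    calc ∑ n ∈ Finset.range k, ‖⟪f, ξ n⟫_ℂ‖ ^ 2
        = ∑ n ∈ Finset.range k, ‖⟪ξ n, f⟫_ℂ‖ ^ 2 := Finset.sum_congr rfl fun n _ => this n
      _ ≤ S := hsum.sum_le_tsum _ (fun n _ => by positivity)
  -- bound on the partial reconstruction sums
  have hbnd : ∀ k : ℕ, ‖∑ n ∈ Finset.range k, ⟪η n, f⟫_ℂ * ⟪f, ξ n⟫_ℂ‖
      ≤ Real.sqrt (B * ‖f‖ ^ 2) * Real.sqrt S := by
    intro k
    calc ‖∑ n ∈ Finset.range k, ⟪η n, f⟫_ℂ * ⟪f, ξ n⟫_ℂ‖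
        ≤ ∑ n ∈ Finset.range k, ‖⟪η n, f⟫_ℂ * ⟪f, ξ n⟫_ℂ‖ := norm_sum_le _ _
      _ = ∑ n ∈ Finset.range k, ‖⟪η n, f⟫_ℂ‖ * ‖⟪f, ξ n⟫_ℂ‖ := by
          refine Finset.sum_congr rfl fun n _ => ?_
          rw [norm_mul]
      _ ≤ Real.sqrt (∑ n ∈ Finset.range k, ‖⟪η n, f⟫_ℂ‖ ^ 2)
            * Real.sqrt (∑ n ∈ Finset.range k, ‖⟪f, ξ n⟫_ℂ‖ ^ 2) := by
          have h3 := Finset.sum_mul_sq_le_sq_mul_sq (Finset.range k)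
            (fun n => ‖⟪η n, f⟫_ℂ‖) (fun n => ‖⟪f, ξ n⟫_ℂ‖)
          have h4 : (0:ℝ) ≤ ∑ n ∈ Finset.range k, ‖⟪η n, f⟫_ℂ‖ * ‖⟪f, ξ n⟫_ℂ‖ :=
            Finset.sum_nonneg fun n _ => by positivity
          have h5 := Real.sqrt_le_sqrt h3
          rw [Real.sqrt_sq h4, Real.sqrt_mul (Finset.sum_nonneg fun n _ => by positivity)] at h5
          exact h5
      _ ≤ Real.sqrt (B * ‖f‖ ^ 2) * Real.sqrt S := by
          refine mul_le_mul (Real.sqrt_le_sqrt (hpartη k)) (Real.sqrt_le_sqrt (hpartξ k))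
            (Real.sqrt_nonneg _) (Real.sqrt_nonneg _)
  -- the limit
  have hlim : Tendsto (fun k : ℕ => ∑ n ∈ Finset.range k, ⟪η n, f⟫_ℂ * ⟪f, ξ n⟫_ℂ)
      atTop (𝓝 ⟪f, f⟫_ℂ) := by
    have h1 : Tendsto (fun k : ℕ => ⟪f, ∑ n ∈ Finset.range k, ⟪η n, f⟫_ℂ • ξ n⟫_ℂ)
        atTop (𝓝 ⟪f, f⟫_ℂ) := Tendsto.inner tendsto_const_nhds (hrec f)
    refine h1.congr fun k => ?_
    rw [inner_sum]
    refine Finset.sum_congr rfl fun n _ => ?_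
    rw [inner_smul_right]
  have hnormlim : Tendsto (fun k : ℕ => ‖∑ n ∈ Finset.range k, ⟪η n, f⟫_ℂ * ⟪f, ξ n⟫_ℂ‖)
      atTop (𝓝 ‖⟪f, f⟫_ℂ‖) := hlim.norm
  have hkey : ‖⟪f, f⟫_ℂ‖ ≤ Real.sqrt (B * ‖f‖ ^ 2) * Real.sqrt S :=
    le_of_tendsto hnormlim (Eventually.of_forall hbnd)
  have hinner : ‖⟪f, f⟫_ℂ‖ = ‖f‖ ^ 2 := by
    rw [inner_self_eq_norm_sq_to_K, norm_pow, RCLike.norm_ofReal, abs_norm]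
  rw [hinner] at hkey
  -- conclude
  by_cases hf : ‖f‖ = 0
  · rw [hf]
    simpa using hS0
  have hfpos : 0 < ‖f‖ := lt_of_le_of_ne (norm_nonneg f) (Ne.symm hf)
  rw [inv_mul_le_iff₀ hB]
  have hsq : (‖f‖ ^ 2) ^ 2 ≤ (Real.sqrt (B * ‖f‖ ^ 2) * Real.sqrt S) ^ 2 :=
    pow_le_pow_left₀ (by positivity) hkey 2
  rw [mul_pow, Real.sq_sqrt (by positivity), Real.sq_sqrt hS0] at hsq
  have h6 : ‖f‖ ^ 2 * ‖f‖ ^ 2 ≤ (B * S) * ‖f‖ ^ 2 := by nlinarith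
  have h7 : ‖f‖ ^ 2 ≤ B * S := le_of_mul_le_mul_right h6 (by positivity)
  exact h7

end S5Aux


/-- Let `ξ` be a sequence in `H` whose synthesis operator `D_ξ` is closed.
The following are equivalent: (1) `ξ` is a lower semi-frame of `H`;
(2) there is a Bessel sequence `η` of `H` with `f = Σ_n ⟨f,η_n⟩ ξ_n` for every `f ∈ H`;
(3) `R(D_ξ) = H`, i.e. `D_ξ` is surjective. -/
theorem statement5 (ξ : ℕ → H)
    (Dfun : l2 → H)
    (hD : ∀ c ∈ domD ξ,
      Tendsto (fun k : ℕ => ∑ n ∈ Finset.range k, c n • ξ n) atTop (𝓝 (Dfun c)))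
    (hDclosed : IsClosed {p : l2 × H | p.1 ∈ domD ξ ∧ Dfun p.1 = p.2}) :
    List.TFAE
      [ ∃ A > (0 : ℝ), ∀ f : H,
          ENNReal.ofReal (A * ‖f‖ ^ 2) ≤ ∑' n : ℕ, ((‖⟪ξ n, f⟫_ℂ‖₊ : ℝ≥0∞) ^ 2),
        ∃ η : ℕ → H,
          (∃ B > (0 : ℝ), ∀ f : H,
            ∑' n : ℕ, ((‖⟪η n, f⟫_ℂ‖₊ : ℝ≥0∞) ^ 2) ≤ ENNReal.ofReal (B * ‖f‖ ^ 2)) ∧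
          ∀ f : H, Tendsto (fun k : ℕ => ∑ n ∈ Finset.range k, ⟪η n, f⟫_ℂ • ξ n) atTop (𝓝 f),
        ∀ h : H, ∃ c ∈ domD ξ, Dfun c = h ] := by
  tfae_have 1 → 3 := by
    rintro ⟨A, hA, hlow⟩ h
    exact S5Aux.surj_of_lower hD hDclosed hA hlow h
  tfae_have 3 → 2 := fun hsurj => S5Aux.bessel_dual hD hDclosed hsurj
  tfae_have 2 → 1 := by
    rintro ⟨η, ⟨B, hB, hBessel⟩, hrec⟩
    exact ⟨B⁻¹, inv_pos.mpr hB, fun f => S5Aux.lower_of_bessel hB hBessel hrec f⟩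
  tfae_finish
end
end

section
/- Let ξ = (ξ_n)_{n∈ℕ} be a sequence in H. The following are equivalent: (1) ξ is a Bessel sequence; (2) D(Q_ξ) = ℓ²(ℕ); (3) D(W_ξ) = H. Moreover, in this case Q_ξ = D_ξ and W_ξ = S_ξ. -/
noncomputable section
open scoped InnerProductSpace ComplexInnerProductSpace ComplexConjugate ENNReal
open Filter Topology

/- `H` is a separable complex Hilbert space. -/
variable {H : Type} [NormedAddCommGroup H] [InnerProductSpace ℂ H] [CompleteSpace H]
  [TopologicalSpace.SeparableSpace H]

set_option linter.unusedSectionVars false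
set_option maxHeartbeats 1000000

lemma lp.summable_sq (c : l2) : Summable fun n => ‖c n‖ ^ 2 := by
  have h := lp.memℓp c
  rw [memℓp_gen_iff (by norm_num : 0 < (2:ℝ≥0∞).toReal)] at h
  have h2 : ((2:ℝ≥0∞)).toReal = (2:ℝ) := by norm_num
  rw [h2] at h
  simpa only [Real.rpow_two] using h


lemma besselFin {ξ : ℕ → H} {B : ℝ} (hB : 0 < B)
    (h : ∀ f : H, ∑' n : ℕ, ((‖⟪ξ n, f⟫_ℂ‖₊ : ℝ≥0∞) ^ 2) ≤ ENNReal.ofReal (B * ‖f‖ ^ 2))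
    (f : H) (F : Finset ℕ) : ∑ n ∈ F, ‖⟪ξ n, f⟫_ℂ‖ ^ 2 ≤ B * ‖f‖ ^ 2 := by
  have key : ∀ x : ℂ, ((‖x‖₊ : ℝ≥0∞) ^ 2) = ENNReal.ofReal (‖x‖ ^ 2) := fun x => by
    rw [ENNReal.ofReal_pow (norm_nonneg _), ofReal_norm, enorm_eq_nnnorm]
  have h1 : ENNReal.ofReal (∑ n ∈ F, ‖⟪ξ n, f⟫_ℂ‖ ^ 2) ≤ ENNReal.ofReal (B * ‖f‖ ^ 2) := by
    rw [ENNReal.ofReal_sum_of_nonneg (fun n _ => by positivity)]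
    simp_rw [← key]
    exact (ENNReal.sum_le_tsum F).trans (h f)
  exact (ENNReal.ofReal_le_ofReal_iff (by positivity)).mp h1

lemma besselOfFin {ξ : ℕ → H} {B : ℝ}
    (h : ∀ (f : H) (F : Finset ℕ), ∑ n ∈ F, ‖⟪ξ n, f⟫_ℂ‖ ^ 2 ≤ B * ‖f‖ ^ 2) (f : H) :
    ∑' n : ℕ, ((‖⟪ξ n, f⟫_ℂ‖₊ : ℝ≥0∞) ^ 2) ≤ ENNReal.ofReal (B * ‖f‖ ^ 2) := by
  have key : ∀ x : ℂ, ((‖x‖₊ : ℝ≥0∞) ^ 2) = ENNReal.ofReal (‖x‖ ^ 2) := fun x => by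
    rw [ENNReal.ofReal_pow (norm_nonneg _), ofReal_norm, enorm_eq_nnnorm]
  rw [ENNReal.tsum_eq_iSup_sum]
  refine iSup_le fun F => ?_
  calc ∑ n ∈ F, ((‖⟪ξ n, f⟫_ℂ‖₊ : ℝ≥0∞) ^ 2)
      = ENNReal.ofReal (∑ n ∈ F, ‖⟪ξ n, f⟫_ℂ‖ ^ 2) := by
        rw [ENNReal.ofReal_sum_of_nonneg (fun n _ => by positivity)]; simp_rw [← key]
    _ ≤ ENNReal.ofReal (B * ‖f‖ ^ 2) := ENNReal.ofReal_le_ofReal (h f F)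

lemma normSumSq {ξ : ℕ → H} {B : ℝ} (hB : 0 ≤ B)
    (hfin : ∀ (f : H) (F : Finset ℕ), ∑ n ∈ F, ‖⟪ξ n, f⟫_ℂ‖ ^ 2 ≤ B * ‖f‖ ^ 2)
    (c : ℕ → ℂ) (F : Finset ℕ) :
    ‖∑ n ∈ F, c n • ξ n‖ ^ 2 ≤ B * ∑ n ∈ F, ‖c n‖ ^ 2 := by
  set v := ∑ n ∈ F, c n • ξ n with hv
  have h1 : (‖v‖ ^ 2 : ℝ) = RCLike.re ⟪v, v⟫_ℂ := by
    rw [← @inner_self_eq_norm_sq ℂ]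
  have h2 : ⟪v, v⟫_ℂ = ∑ n ∈ F, c n * ⟪v, ξ n⟫_ℂ := by
    rw [hv]
    conv_lhs => rw [inner_sum]
    exact Finset.sum_congr rfl fun n _ => inner_smul_right _ _ _
  have h3 : ‖v‖ ^ 2 ≤ ∑ n ∈ F, ‖c n‖ * ‖⟪v, ξ n⟫_ℂ‖ := by
    rw [h1]
    calc RCLike.re ⟪v, v⟫_ℂ ≤ ‖⟪v, v⟫_ℂ‖ := RCLike.re_le_norm _
      _ = ‖∑ n ∈ F, c n * ⟪v, ξ n⟫_ℂ‖ := by rw [h2]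
      _ ≤ ∑ n ∈ F, ‖c n * ⟪v, ξ n⟫_ℂ‖ := norm_sum_le _ _
      _ = ∑ n ∈ F, ‖c n‖ * ‖⟪v, ξ n⟫_ℂ‖ := by simp [norm_mul]
  have h4 : (∑ n ∈ F, ‖c n‖ * ‖⟪v, ξ n⟫_ℂ‖) ^ 2
      ≤ (∑ n ∈ F, ‖c n‖ ^ 2) * (B * ‖v‖ ^ 2) := by
    refine (Finset.sum_mul_sq_le_sq_mul_sq F _ _).trans ?_
    refine mul_le_mul_of_nonneg_left ?_ (by positivity)
    calc ∑ n ∈ F, ‖⟪v, ξ n⟫_ℂ‖ ^ 2 = ∑ n ∈ F, ‖⟪ξ n, v⟫_ℂ‖ ^ 2 := by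
          refine Finset.sum_congr rfl fun n _ => ?_
          rw [norm_inner_symm]
      _ ≤ B * ‖v‖ ^ 2 := hfin v F
  have hS : (0:ℝ) ≤ ∑ n ∈ F, ‖c n‖ ^ 2 := by positivity
  have hs : (0:ℝ) ≤ ∑ n ∈ F, ‖c n‖ * ‖⟪v, ξ n⟫_ℂ‖ := by positivity
  rcases eq_or_lt_of_le (sq_nonneg ‖v‖) with h0 | h0
  · nlinarith
  · nlinarith [sq_nonneg (‖v‖^2 - ∑ n ∈ F, ‖c n‖ * ‖⟪v, ξ n⟫_ℂ‖)]



lemma summableSmul {ξ : ℕ → H} {B : ℝ} (hB : 0 ≤ B)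
    (hfin : ∀ (f : H) (F : Finset ℕ), ∑ n ∈ F, ‖⟪ξ n, f⟫_ℂ‖ ^ 2 ≤ B * ‖f‖ ^ 2)
    (c : ℕ → ℂ) (hc : Summable fun n => ‖c n‖ ^ 2) :
    Summable fun n => c n • ξ n := by
  rw [summable_iff_vanishing]
  intro e he
  obtain ⟨ε, hε, hball⟩ := Metric.mem_nhds_iff.mp he
  obtain ⟨s, hs⟩ := hc.vanishing (Metric.ball_mem_nhds (0:ℝ) (show (0:ℝ) < ε ^ 2 / (B + 1) by positivity))
  refine ⟨s, fun t ht => hball ?_⟩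
  rw [Metric.mem_ball, dist_zero_right]
  have h1 := normSumSq hB hfin c t
  have h2 := hs t ht
  rw [Metric.mem_ball, dist_zero_right, Real.norm_eq_abs] at h2
  have h3 : (0:ℝ) ≤ ∑ n ∈ t, ‖c n‖ ^ 2 := by positivity
  rw [abs_of_nonneg h3] at h2
  have h5 : B * ∑ n ∈ t, ‖c n‖ ^ 2 < ε ^ 2 := by
    rcases eq_or_lt_of_le hB with h | h
    · rw [← h]; simpa using pow_pos hε 2
    · have := mul_le_mul_of_nonneg_left h2.le hB
      have hlt : B * (ε ^ 2 / (B + 1)) < ε ^ 2 := by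
        rw [mul_div_assoc', div_lt_iff₀ (by positivity)]
        nlinarith
      linarith
  have h4 : ‖∑ n ∈ t, c n • ξ n‖ ^ 2 < ε ^ 2 := lt_of_le_of_lt h1 h5
  exact lt_of_pow_lt_pow_left₀ 2 hε.le h4

/-- evaluation functional on `l2` -/
def evCLM (n : ℕ) : l2 →L[ℂ] ℂ :=
  LinearMap.mkContinuous
    { toFun := fun c => c n
      map_add' := fun c d => by simp
      map_smul' := fun a c => by simp }
    1 (fun c => by
      rw [one_mul]; exact lp.norm_apply_le_norm (by norm_num : (2:ℝ≥0∞) ≠ 0) c n)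

@[simp] lemma evCLM_apply (n : ℕ) (c : l2) : evCLM n c = c n := rfl

/-- truncated synthesis operator -/
def Tk (ξ : ℕ → H) (k : ℕ) : l2 →L[ℂ] H :=
  ∑ n ∈ Finset.range k, (evCLM n).smulRight (ξ n)

lemma Tk_apply (ξ : ℕ → H) (k : ℕ) (c : l2) :
    Tk ξ k c = ∑ n ∈ Finset.range k, c n • ξ n := by
  simp [Tk, ContinuousLinearMap.sum_apply]

/-- truncated frame operator -/
def Uk (ξ : ℕ → H) (k : ℕ) : H →L[ℂ] H :=
  ∑ n ∈ Finset.range k, (innerSL ℂ (ξ n)).smulRight (ξ n)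

lemma Uk_apply (ξ : ℕ → H) (k : ℕ) (f : H) :
    Uk ξ k f = ∑ n ∈ Finset.range k, ⟪ξ n, f⟫_ℂ • ξ n := by
  simp [Uk, ContinuousLinearMap.sum_apply]

lemma weak_bdd (x : ℕ → H) (L : H)
    (h : ∀ y : H, Tendsto (fun k => ⟪y, x k⟫_ℂ) atTop (𝓝 ⟪y, L⟫_ℂ)) :
    ∃ C : ℝ, ∀ k, ‖x k‖ ≤ C := by
  have hb : ∀ y : H, ∃ C : ℝ, ∀ k, ‖innerSL ℂ (x k) y‖ ≤ C := by
    intro y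
    obtain ⟨C, hC⟩ := ((h y).norm).bddAbove_range
    refine ⟨C, fun k => ?_⟩
    have h1 : ‖innerSL ℂ (x k) y‖ = ‖⟪y, x k⟫_ℂ‖ := by
      simp [norm_inner_symm]
    rw [h1]
    exact hC ⟨k, rfl⟩
  obtain ⟨C, hC⟩ := banach_steinhaus hb
  exact ⟨C, fun k => by simpa [innerSL_apply_norm] using hC k⟩

lemma re_inner_sum (ξ : ℕ → H) (f : H) (k : ℕ) :
    RCLike.re ⟪f, ∑ n ∈ Finset.range k, ⟪ξ n, f⟫_ℂ • ξ n⟫_ℂ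
      = ∑ n ∈ Finset.range k, ‖⟪ξ n, f⟫_ℂ‖ ^ 2 := by
  have h1 : ⟪f, ∑ n ∈ Finset.range k, ⟪ξ n, f⟫_ℂ • ξ n⟫_ℂ
      = ∑ n ∈ Finset.range k, ((‖⟪ξ n, f⟫_ℂ‖ : ℂ) ^ 2) := by
    rw [inner_sum]
    refine Finset.sum_congr rfl fun n _ => ?_
    rw [inner_smul_right, ← inner_conj_symm (ξ n) f, RCLike.conj_mul]
    simp [norm_inner_symm f]
  rw [h1]
  rw [map_sum]
  refine Finset.sum_congr rfl fun n _ => ?_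
  rw [← Complex.ofReal_pow]
  exact Complex.ofReal_re _

lemma sq_sum_le_of_le {S A : ℝ} (hS : 0 ≤ S) (hA : 0 ≤ A) (h : S ^ 2 ≤ A * S) : S ≤ A := by
  rcases eq_or_lt_of_le hS with h0 | h0
  · linarith
  · nlinarith

lemma finBessel_of_Uk_bdd {ξ : ℕ → H} {M : ℝ} (hM : ∀ k, ‖Uk ξ k‖ ≤ M)
    (f : H) (F : Finset ℕ) : ∑ n ∈ F, ‖⟪ξ n, f⟫_ℂ‖ ^ 2 ≤ (M + 1) * ‖f‖ ^ 2 := by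
  have hM0 : 0 ≤ M := le_trans (norm_nonneg _) (hM 0)
  have hrange : ∀ k : ℕ, ∑ n ∈ Finset.range k, ‖⟪ξ n, f⟫_ℂ‖ ^ 2 ≤ M * ‖f‖ ^ 2 := by
    intro k
    calc ∑ n ∈ Finset.range k, ‖⟪ξ n, f⟫_ℂ‖ ^ 2
        = RCLike.re ⟪f, Uk ξ k f⟫_ℂ := by rw [Uk_apply, re_inner_sum]
      _ ≤ ‖⟪f, Uk ξ k f⟫_ℂ‖ := RCLike.re_le_norm _
      _ ≤ ‖f‖ * ‖Uk ξ k f‖ := norm_inner_le_norm _ _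
      _ ≤ ‖f‖ * (M * ‖f‖) := by
          refine mul_le_mul_of_nonneg_left ?_ (norm_nonneg _)
          exact ((Uk ξ k).le_opNorm f).trans
            (mul_le_mul_of_nonneg_right (hM k) (norm_nonneg _))
      _ = M * ‖f‖ ^ 2 := by ring
  obtain ⟨k, hk⟩ : ∃ k : ℕ, F ⊆ Finset.range k := ⟨F.sup id + 1, fun n hn =>
    Finset.mem_range.mpr (Nat.lt_succ_of_le (Finset.le_sup (f := id) hn))⟩
  calc ∑ n ∈ F, ‖⟪ξ n, f⟫_ℂ‖ ^ 2
      ≤ ∑ n ∈ Finset.range k, ‖⟪ξ n, f⟫_ℂ‖ ^ 2 :=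
        Finset.sum_le_sum_of_subset_of_nonneg hk (fun n _ _ => by positivity)
    _ ≤ M * ‖f‖ ^ 2 := hrange k
    _ ≤ (M + 1) * ‖f‖ ^ 2 := by nlinarith [sq_nonneg ‖f‖]

lemma finBessel_of_Tk_bdd {ξ : ℕ → H} {M : ℝ} (hM : ∀ k, ‖Tk ξ k‖ ≤ M)
    (f : H) (F : Finset ℕ) : ∑ n ∈ F, ‖⟪ξ n, f⟫_ℂ‖ ^ 2 ≤ (M ^ 2 + 1) * ‖f‖ ^ 2 := by
  have hM0 : 0 ≤ M := le_trans (norm_nonneg _) (hM 0)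
  have hrange : ∀ k : ℕ, ∑ n ∈ Finset.range k, ‖⟪ξ n, f⟫_ℂ‖ ^ 2 ≤ M ^ 2 * ‖f‖ ^ 2 := by
    intro k
    set c : l2 := ∑ n ∈ Finset.range k, lp.single 2 n (⟪ξ n, f⟫_ℂ) with hc
    have hcoord : ∀ m, c m = if m ∈ Finset.range k then ⟪ξ m, f⟫_ℂ else 0 := by
      intro m
      simp only [hc, lp.coeFn_sum, Finset.sum_apply, lp.single_apply, Finset.sum_dite_eq, Pi.single_apply, Finset.sum_ite_eq]
    set S := ∑ n ∈ Finset.range k, ‖⟪ξ n, f⟫_ℂ‖ ^ 2 with hSdef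
    have hS0 : 0 ≤ S := by positivity
    have hnorm : ‖c‖ ^ 2 = S := by
      have h := lp.norm_sum_single (p := 2) (by norm_num) (fun n => ⟪ξ n, f⟫_ℂ)
        (Finset.range k)
      have h2 : ((2:ℝ≥0∞)).toReal = (2:ℝ) := by norm_num
      rw [h2] at h
      simp only [Real.rpow_two] at h
      exact h
    have hTc : Tk ξ k c = ∑ n ∈ Finset.range k, ⟪ξ n, f⟫_ℂ • ξ n := by
      rw [Tk_apply]
      refine Finset.sum_congr rfl fun n hn => ?_
      rw [hcoord n, if_pos hn]
    have key : S ^ 2 ≤ (M ^ 2 * ‖f‖ ^ 2) * S := by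
      have h3 : S ≤ ‖f‖ * (M * ‖c‖) := by
        calc S = RCLike.re ⟪f, Tk ξ k c⟫_ℂ := by rw [hTc, re_inner_sum]
          _ ≤ ‖⟪f, Tk ξ k c⟫_ℂ‖ := RCLike.re_le_norm _
          _ ≤ ‖f‖ * ‖Tk ξ k c‖ := norm_inner_le_norm _ _
          _ ≤ ‖f‖ * (M * ‖c‖) := by
              refine mul_le_mul_of_nonneg_left ?_ (norm_nonneg _)
              exact ((Tk ξ k).le_opNorm c).trans
                (mul_le_mul_of_nonneg_right (hM k) (norm_nonneg _))
      calc S ^ 2 ≤ (‖f‖ * (M * ‖c‖)) ^ 2 := by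
            exact pow_le_pow_left₀ hS0 h3 2
        _ = (M ^ 2 * ‖f‖ ^ 2) * ‖c‖ ^ 2 := by ring
        _ = (M ^ 2 * ‖f‖ ^ 2) * S := by rw [hnorm]
    exact sq_sum_le_of_le hS0 (by positivity) key
  obtain ⟨k, hk⟩ : ∃ k : ℕ, F ⊆ Finset.range k := ⟨F.sup id + 1, fun n hn =>
    Finset.mem_range.mpr (Nat.lt_succ_of_le (Finset.le_sup (f := id) hn))⟩
  calc ∑ n ∈ F, ‖⟪ξ n, f⟫_ℂ‖ ^ 2
      ≤ ∑ n ∈ Finset.range k, ‖⟪ξ n, f⟫_ℂ‖ ^ 2 :=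
        Finset.sum_le_sum_of_subset_of_nonneg hk (fun n _ _ => by positivity)
    _ ≤ M ^ 2 * ‖f‖ ^ 2 := hrange k
    _ ≤ (M ^ 2 + 1) * ‖f‖ ^ 2 := by nlinarith [sq_nonneg ‖f‖]

/-- For a sequence `ξ` in `H` the following are equivalent:
(1) `ξ` is a Bessel sequence; (2) `D(Q_ξ) = ℓ²(ℕ)`; (3) `D(W_ξ) = H`.
Moreover, in this case `Q_ξ = D_ξ` and `W_ξ = S_ξ` (equality of domains included). -/
theorem statement7 (ξ : ℕ → H)
    (Dfun : l2 → H)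
    (hD : ∀ c ∈ domD ξ,
      Tendsto (fun k : ℕ => ∑ n ∈ Finset.range k, c n • ξ n) atTop (𝓝 (Dfun c)))
    (Sfun : H → H)
    (hS : ∀ f ∈ domS ξ,
      Tendsto (fun k : ℕ => ∑ n ∈ Finset.range k, ⟪ξ n, f⟫_ℂ • ξ n) atTop (𝓝 (Sfun f)))
    (Qfun : l2 → H)
    (hQ : ∀ c ∈ domQ ξ, ∀ y : H,
      Tendsto (fun k : ℕ => ⟪y, ∑ n ∈ Finset.range k, c n • ξ n⟫_ℂ) atTop (𝓝 ⟪y, Qfun c⟫_ℂ))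
    (Wfun : H → H)
    (hW : ∀ f ∈ domW ξ, ∀ y : H,
      Tendsto (fun k : ℕ => ⟪y, ∑ n ∈ Finset.range k, ⟪ξ n, f⟫_ℂ • ξ n⟫_ℂ) atTop
        (𝓝 ⟪y, Wfun f⟫_ℂ)) :
    List.TFAE
      [ ∃ B > (0 : ℝ), ∀ f : H,
          ∑' n : ℕ, ((‖⟪ξ n, f⟫_ℂ‖₊ : ℝ≥0∞) ^ 2) ≤ ENNReal.ofReal (B * ‖f‖ ^ 2),
        domQ ξ = Set.univ,
        domW ξ = Set.univ ]
    ∧ ((∃ B > (0 : ℝ), ∀ f : H,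
          ∑' n : ℕ, ((‖⟪ξ n, f⟫_ℂ‖₊ : ℝ≥0∞) ^ 2) ≤ ENNReal.ofReal (B * ‖f‖ ^ 2)) →
        ((domQ ξ = domD ξ ∧ ∀ c ∈ domQ ξ, Qfun c = Dfun c)
          ∧ (domW ξ = domS ξ ∧ ∀ f ∈ domW ξ, Wfun f = Sfun f))) := by
  have hfinQ : ∀ (c : l2), (∀ L : H, True) → True := fun _ _ => trivial
  -- implication (1) ⇒ pointwise facts
  have key12 : (∃ B > (0 : ℝ), ∀ f : H,
      ∑' n : ℕ, ((‖⟪ξ n, f⟫_ℂ‖₊ : ℝ≥0∞) ^ 2) ≤ ENNReal.ofReal (B * ‖f‖ ^ 2)) →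
      domD ξ = Set.univ ∧ domQ ξ = Set.univ ∧ domS ξ = Set.univ ∧ domW ξ = Set.univ := by
    rintro ⟨B, hB, h⟩
    have hfin := besselFin hB h
    have hDuniv : domD ξ = Set.univ := by
      refine Set.eq_univ_of_forall fun c => ?_
      have hsum := summableSmul hB.le hfin (fun n => c n) (lp.summable_sq c)
      exact ⟨∑' n, c n • ξ n, hsum.hasSum.tendsto_sum_nat⟩
    have hQuniv : domQ ξ = Set.univ := by
      refine Set.eq_univ_of_forall fun c => ?_
      have hsum := summableSmul hB.le hfin (fun n => c n) (lp.summable_sq c)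
      exact ⟨∑' n, c n • ξ n, fun y =>
        Tendsto.inner tendsto_const_nhds hsum.hasSum.tendsto_sum_nat⟩
    have hcoeff : ∀ f : H, Summable fun n => ‖⟪ξ n, f⟫_ℂ‖ ^ 2 := fun f =>
      summable_of_sum_range_le (fun n => by positivity)
        (fun k => hfin f (Finset.range k))
    have hSuniv : domS ξ = Set.univ := by
      refine Set.eq_univ_of_forall fun f => ?_
      have hsum := summableSmul hB.le hfin (fun n => ⟪ξ n, f⟫_ℂ) (hcoeff f)
      exact ⟨∑' n, ⟪ξ n, f⟫_ℂ • ξ n, hsum.hasSum.tendsto_sum_nat⟩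
    have hWuniv : domW ξ = Set.univ := by
      refine Set.eq_univ_of_forall fun f => ?_
      have hsum := summableSmul hB.le hfin (fun n => ⟪ξ n, f⟫_ℂ) (hcoeff f)
      exact ⟨∑' n, ⟪ξ n, f⟫_ℂ • ξ n, fun y =>
        Tendsto.inner tendsto_const_nhds hsum.hasSum.tendsto_sum_nat⟩
    exact ⟨hDuniv, hQuniv, hSuniv, hWuniv⟩
  constructor
  · tfae_have 1 → 2 := fun h => (key12 h).2.1
    tfae_have 1 → 3 := fun h => (key12 h).2.2.2
    tfae_have 2 → 1 := by
      intro hQ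
      have hbdd : ∀ c : l2, ∃ C : ℝ, ∀ k, ‖Tk ξ k c‖ ≤ C := by
        intro c
        have hc : c ∈ domQ ξ := hQ ▸ Set.mem_univ c
        obtain ⟨L, hL⟩ := hc
        obtain ⟨C, hC⟩ := weak_bdd (fun k => ∑ n ∈ Finset.range k, c n • ξ n) L hL
        exact ⟨C, fun k => by rw [Tk_apply]; exact hC k⟩
      obtain ⟨M, hM⟩ := banach_steinhaus hbdd
      have hM0 : (0:ℝ) ≤ M := le_trans (norm_nonneg _) (hM 0)
      exact ⟨M ^ 2 + 1, by positivity, besselOfFin (finBessel_of_Tk_bdd hM)⟩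
    tfae_have 3 → 1 := by
      intro hW
      have hbdd : ∀ f : H, ∃ C : ℝ, ∀ k, ‖Uk ξ k f‖ ≤ C := by
        intro f
        have hf : f ∈ domW ξ := hW ▸ Set.mem_univ f
        obtain ⟨L, hL⟩ := hf
        obtain ⟨C, hC⟩ := weak_bdd (fun k => ∑ n ∈ Finset.range k, ⟪ξ n, f⟫_ℂ • ξ n) L hL
        exact ⟨C, fun k => by rw [Uk_apply]; exact hC k⟩
      obtain ⟨M, hM⟩ := banach_steinhaus hbdd
      have hM0 : (0:ℝ) ≤ M := le_trans (norm_nonneg _) (hM 0)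
      exact ⟨M + 1, by positivity, besselOfFin (finBessel_of_Uk_bdd hM)⟩
    tfae_finish
  · intro hBessel
    obtain ⟨hDuniv, hQuniv, hSuniv, hWuniv⟩ := key12 hBessel
    refine ⟨⟨by rw [hQuniv, hDuniv], fun c hc => ?_⟩, ⟨by rw [hWuniv, hSuniv], fun f hf => ?_⟩⟩
    · have hcD : c ∈ domD ξ := hDuniv ▸ Set.mem_univ c
      have h1 := hD c hcD
      refine ext_inner_left ℂ fun y => ?_
      exact tendsto_nhds_unique (hQ c hc y) (Tendsto.inner tendsto_const_nhds h1)
    · have hfS : f ∈ domS ξ := hSuniv ▸ Set.mem_univ f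
      have h1 := hS f hfS
      refine ext_inner_left ℂ fun y => ?_
      exact tendsto_nhds_unique (hW f hf y) (Tendsto.inner tendsto_const_nhds h1)
end
end

section
/- Let ξ = (ξ_n)_{n∈ℕ} be a sequence in H such that D(C_ξ) is dense in H. If the synthesis operator D_ξ is closed, then T_ξ = S_ξ (equality of operators, including domains). -/
noncomputable section
open scoped InnerProductSpace ComplexInnerProductSpace ComplexConjugate ENNReal
open Filter Topology

/- `H` is a separable complex Hilbert space. -/
variable {H : Type} [NormedAddCommGroup H] [InnerProductSpace ℂ H] [CompleteSpace H]
  [TopologicalSpace.SeparableSpace H]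

/-- Let `ξ` be a sequence in `H` with `D(C_ξ)` dense.  If the synthesis
operator `D_ξ` is closed, then `T_ξ = S_ξ` (equality of domains included). -/
theorem statement8 (ξ : ℕ → H) (hdense : Dense (domC ξ))
    (Dfun : l2 → H)
    (hD : ∀ c ∈ domD ξ,
      Tendsto (fun k : ℕ => ∑ n ∈ Finset.range k, c n • ξ n) atTop (𝓝 (Dfun c)))
    (hDclosed : IsClosed {p : l2 × H | p.1 ∈ domD ξ ∧ Dfun p.1 = p.2})
    (Sfun : H → H)
    (hS : ∀ f ∈ domS ξ,
      Tendsto (fun k : ℕ => ∑ n ∈ Finset.range k, ⟪ξ n, f⟫_ℂ • ξ n) atTop (𝓝 (Sfun f)))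
    (Tfun : H → H)
    (hT : ∀ f ∈ domT ξ, Tfun f ∈ closure (domC ξ) ∧
      ∀ g ∈ domC ξ, ∑' n : ℕ, ⟪ξ n, f⟫_ℂ * ⟪g, ξ n⟫_ℂ = ⟪g, Tfun f⟫_ℂ) :
    domT ξ = domS ξ ∧ ∀ f ∈ domT ξ, Tfun f = Sfun f := by
  classical
  -- pointwise pairing is summable for f, g ∈ domC
  have hpair : ∀ f, f ∈ domC ξ → ∀ g, g ∈ domC ξ →
      Summable (fun n => ⟪ξ n, f⟫_ℂ * ⟪g, ξ n⟫_ℂ) := by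
    intro f hf g hg
    have h := lp.summable_inner (𝕜 := ℂ) (⟨_, hg⟩ : l2) (⟨_, hf⟩ : l2)
    refine Summable.congr h fun n => ?_
    simp only [RCLike.inner_apply]
    show ⟪ξ n, f⟫_ℂ * conj ⟪ξ n, g⟫_ℂ = _
    rw [inner_conj_symm]
  -- inner product with partial sums
  have hinnerP : ∀ (f g : H) (k : ℕ),
      ⟪g, ∑ n ∈ Finset.range k, ⟪ξ n, f⟫_ℂ • ξ n⟫_ℂ
        = ∑ n ∈ Finset.range k, ⟪ξ n, f⟫_ℂ * ⟪g, ξ n⟫_ℂ := by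
    intro f g k
    rw [inner_sum]
    exact Finset.sum_congr rfl fun n _ => inner_smul_right _ _ _
  -- domS ⊆ domC
  have hSC : ∀ f, f ∈ domS ξ → f ∈ domC ξ := by
    intro f hf
    have h1 : Tendsto (fun k => ⟪f, ∑ n ∈ Finset.range k, ⟪ξ n, f⟫_ℂ • ξ n⟫_ℂ) atTop
        (𝓝 ⟪f, Sfun f⟫_ℂ) := tendsto_const_nhds.inner (hS f hf)
    have h3 : ∀ k, ⟪f, ∑ n ∈ Finset.range k, ⟪ξ n, f⟫_ℂ • ξ n⟫_ℂ
        = ((∑ n ∈ Finset.range k, ‖⟪ξ n, f⟫_ℂ‖ ^ 2 : ℝ) : ℂ) := by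
      intro k
      rw [hinnerP f f k]
      push_cast
      refine Finset.sum_congr rfl fun n _ => ?_
      rw [← inner_conj_symm f (ξ n)]
      exact_mod_cast Complex.mul_conj' _
    have h2 : Tendsto (fun k => ∑ n ∈ Finset.range k, ‖⟪ξ n, f⟫_ℂ‖ ^ 2) atTop
        (𝓝 ((⟪f, Sfun f⟫_ℂ).re)) := by
      have := (Complex.continuous_re.tendsto _).comp h1
      refine this.congr fun k => ?_
      rw [Function.comp_apply, h3 k, Complex.ofReal_re]
    have hmono : Monotone (fun k => ∑ n ∈ Finset.range k, ‖⟪ξ n, f⟫_ℂ‖ ^ 2) := by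
      intro a b hab
      exact Finset.sum_le_sum_of_subset_of_nonneg (Finset.range_subset_range.2 hab)
        (fun n _ _ => sq_nonneg _)
    have hbound : ∀ k, ∑ n ∈ Finset.range k, ‖⟪ξ n, f⟫_ℂ‖ ^ 2 ≤ (⟪f, Sfun f⟫_ℂ).re :=
      fun k => hmono.ge_of_tendsto h2 k
    have hsumm : Summable (fun n => ‖⟪ξ n, f⟫_ℂ‖ ^ 2) :=
      summable_of_sum_range_le (fun n => sq_nonneg _) hbound
    apply memℓp_gen
    have h4 : (2 : ℝ≥0∞).toReal = ((2 : ℕ) : ℝ) := by norm_num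
    rw [h4]
    simpa only [Real.rpow_natCast] using hsumm
  -- the key computation for f ∈ domS
  have key : ∀ f, f ∈ domS ξ → ∀ g, g ∈ domC ξ →
      ∑' n, ⟪ξ n, f⟫_ℂ * ⟪g, ξ n⟫_ℂ = ⟪g, Sfun f⟫_ℂ := by
    intro f hf g hg
    have hsummable := hpair f (hSC f hf) g hg
    have h1 := hsummable.hasSum.tendsto_sum_nat
    have h2 : Tendsto (fun k => ∑ n ∈ Finset.range k, ⟪ξ n, f⟫_ℂ * ⟪g, ξ n⟫_ℂ) atTop
        (𝓝 ⟪g, Sfun f⟫_ℂ) :=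
      (tendsto_const_nhds.inner (hS f hf)).congr fun k => hinnerP f g k
    exact tendsto_nhds_unique h1 h2
  -- algebraic facts about domD and Dfun
  have hDadd : ∀ a b : l2, a ∈ domD ξ → b ∈ domD ξ →
      (a + b) ∈ domD ξ ∧ Dfun (a + b) = Dfun a + Dfun b := by
    intro a b ha hb
    have h1 := (hD a ha).add (hD b hb)
    have h3 : Tendsto (fun k => ∑ n ∈ Finset.range k, (a + b) n • ξ n) atTop
        (𝓝 (Dfun a + Dfun b)) := by
      refine h1.congr fun k => ?_
      rw [← Finset.sum_add_distrib]
      refine Finset.sum_congr rfl fun n _ => ?_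
      rw [lp.coeFn_add]
      simp [add_smul]
    exact ⟨⟨_, h3⟩, tendsto_nhds_unique (hD _ ⟨_, h3⟩) h3⟩
  have hDsmul : ∀ (r : ℂ) (a : l2), a ∈ domD ξ →
      (r • a) ∈ domD ξ ∧ Dfun (r • a) = r • Dfun a := by
    intro r a ha
    have h1 := (hD a ha).const_smul r
    have h3 : Tendsto (fun k => ∑ n ∈ Finset.range k, (r • a) n • ξ n) atTop
        (𝓝 (r • Dfun a)) := by
      refine h1.congr fun k => ?_
      rw [Finset.smul_sum]
      refine Finset.sum_congr rfl fun n _ => ?_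
      rw [lp.coeFn_smul]
      simp [smul_smul]
    exact ⟨⟨_, h3⟩, tendsto_nhds_unique (hD _ ⟨_, h3⟩) h3⟩
  have hDzero : (0 : l2) ∈ domD ξ ∧ Dfun 0 = 0 := by
    have h3 : Tendsto (fun k => ∑ n ∈ Finset.range k, (0 : l2) n • ξ n) atTop
        (𝓝 (0 : H)) := by
      refine tendsto_const_nhds.congr fun k => ?_
      symm
      refine Finset.sum_eq_zero fun n _ => ?_
      rw [lp.coeFn_zero]
      simp
    exact ⟨⟨_, h3⟩, tendsto_nhds_unique (hD _ ⟨_, h3⟩) h3⟩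
  -- domT ⊆ domS, via the closed graph of D in `WithLp 2 (l2 × H)`
  have hTS : ∀ f, f ∈ domT ξ → f ∈ domS ξ := by
    intro f hf
    obtain ⟨hfC, h, -, hsum⟩ := hf
    set c : l2 := ⟨fun n => ⟪ξ n, f⟫_ℂ, hfC⟩ with hcdef
    let G : Submodule ℂ (WithLp 2 (l2 × H)) :=
      { carrier := {x | x.fst ∈ domD ξ ∧ Dfun x.fst = x.snd}
        add_mem' := by
          rintro x y ⟨hx1, hx2⟩ ⟨hy1, hy2⟩
          refine ⟨(hDadd _ _ hx1 hy1).1, ?_⟩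
          show Dfun (x.fst + y.fst) = x.snd + y.snd
          rw [(hDadd _ _ hx1 hy1).2, hx2, hy2]
        zero_mem' := hDzero
        smul_mem' := by
          rintro r x ⟨hx1, hx2⟩
          refine ⟨(hDsmul r _ hx1).1, ?_⟩
          show Dfun (r • x.fst) = r • x.snd
          rw [(hDsmul r _ hx1).2, hx2] }
    have hGclosed : IsClosed (G : Set (WithLp 2 (l2 × H))) := by
      have hcont : Continuous (fun x : WithLp 2 (l2 × H) => ((x.fst, x.snd) : l2 × H)) :=
        (WithLp.prodContinuousLinearEquiv 2 ℂ l2 H).continuous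
      exact hDclosed.preimage hcont
    have hGG : Gᗮᗮ = G := by
      rw [Submodule.orthogonal_orthogonal_eq_closure]
      exact SetLike.ext' (by rw [Submodule.topologicalClosure_coe, hGclosed.closure_eq])
    -- single vectors are in the graph
    have hsingle : ∀ n : ℕ,
        ((WithLp.equiv 2 (l2 × H)).symm (lp.single 2 n (1 : ℂ), ξ n)) ∈ G := by
      intro n
      have htend : Tendsto (fun k => ∑ m ∈ Finset.range k, (lp.single 2 n (1 : ℂ) : l2) m • ξ m)
          atTop (𝓝 (ξ n)) := by
        apply tendsto_nhds_of_eventually_eq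
        filter_upwards [eventually_gt_atTop n] with k hk
        rw [Finset.sum_eq_single n]
        · rw [lp.single_apply_self, one_smul]
        · intro m _ hm
          rw [lp.single_apply_ne 2 n _ hm, zero_smul]
        · intro hn
          exact absurd (Finset.mem_range.2 hk) hn
      exact ⟨⟨_, htend⟩, tendsto_nhds_unique (hD _ ⟨_, htend⟩) htend⟩
    -- the pair (c, h) lies in Gᗮᗮ = G
    have hch : ((WithLp.equiv 2 (l2 × H)).symm (c, h)) ∈ Gᗮᗮ := by
      rw [Submodule.mem_orthogonal]
      intro x hx
      -- x ∈ Gᗮ; identify its first component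
      have hxn : ∀ n : ℕ, x.fst n = -⟪ξ n, x.snd⟫_ℂ := by
        intro n
        have h0 := (Submodule.mem_orthogonal _ _).1 hx _ (hsingle n)
        rw [WithLp.prod_inner_apply] at h0
        change ⟪lp.single 2 n (1 : ℂ), x.fst⟫_ℂ + ⟪ξ n, x.snd⟫_ℂ = 0 at h0
        have h1 : ⟪lp.single 2 n (1 : ℂ), x.fst⟫_ℂ = x.fst n := by
          simp [lp.inner_single_left, RCLike.inner_apply]
        rw [h1] at h0
        linear_combination h0
      have hx2C : x.snd ∈ domC ξ := by
        have : (fun n => ⟪ξ n, x.snd⟫_ℂ) = (fun n => (-x.fst) n) := by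
          funext n
          rw [lp.coeFn_neg]
          simp [hxn n]
        show Memℓp _ 2
        rw [this]
        exact lp.memℓp (-x.fst)
      -- compute the inner product
      rw [WithLp.prod_inner_apply]
      have e1 : ⟪x.fst, ((WithLp.equiv 2 (l2 × H)).symm (c, h)).fst⟫_ℂ
          = -⟪x.snd, h⟫_ℂ := by
        have hfst : ((WithLp.equiv 2 (l2 × H)).symm (c, h)).fst = c := rfl
        rw [hfst]
        have := lp.inner_eq_tsum (𝕜 := ℂ) x.fst c
        rw [this]
        have hterm : ∀ n : ℕ, ⟪x.fst n, c n⟫_ℂ = -(⟪ξ n, f⟫_ℂ * ⟪x.snd, ξ n⟫_ℂ) := by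
          intro n
          have hcn : c n = ⟪ξ n, f⟫_ℂ := rfl
          rw [RCLike.inner_apply, hcn, hxn n, map_neg, inner_conj_symm]
          ring
        calc (∑' n, ⟪x.fst n, c n⟫_ℂ)
            = ∑' n, -(⟪ξ n, f⟫_ℂ * ⟪x.snd, ξ n⟫_ℂ) := by
              exact tsum_congr hterm
          _ = -∑' n, ⟪ξ n, f⟫_ℂ * ⟪x.snd, ξ n⟫_ℂ := tsum_neg
          _ = -⟪x.snd, h⟫_ℂ := by rw [hsum _ hx2C]
      have e2 : ⟪x.snd, ((WithLp.equiv 2 (l2 × H)).symm (c, h)).snd⟫_ℂ = ⟪x.snd, h⟫_ℂ := rfl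
      change ⟪x.fst, ((WithLp.equiv 2 (l2 × H)).symm (c, h)).fst⟫_ℂ
          + ⟪x.snd, ((WithLp.equiv 2 (l2 × H)).symm (c, h)).snd⟫_ℂ = 0
      rw [e1, e2]
      ring
    rw [hGG] at hch
    obtain ⟨hcD, -⟩ := hch
    obtain ⟨L, hL⟩ := hcD
    exact ⟨L, hL⟩
  constructor
  · apply Set.eq_of_subset_of_subset
    · exact fun f hf => hTS f hf
    · intro f hf
      refine ⟨hSC f hf, Sfun f, ?_, fun g hg => key f hf g hg⟩
      rw [hdense.closure_eq]; trivial
  · intro f hf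
    have hfS := hTS f hf
    have hTf := (hT f hf).2
    -- ⟪g, Tfun f⟫ = ⟪g, Sfun f⟫ for all g in the dense set domC
    have heq : ∀ g ∈ domC ξ, ⟪g, Tfun f⟫_ℂ = ⟪g, Sfun f⟫_ℂ := by
      intro g hg
      rw [← hTf g hg, key f hfS g hg]
    have hcont1 : Continuous (fun g : H => ⟪g, Tfun f⟫_ℂ) := continuous_id.inner continuous_const
    have hcont2 : Continuous (fun g : H => ⟪g, Sfun f⟫_ℂ) := continuous_id.inner continuous_const
    have hfun : (fun g : H => ⟪g, Tfun f⟫_ℂ) = fun g : H => ⟪g, Sfun f⟫_ℂ :=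
      hcont1.ext_on hdense hcont2 heq
    have hz : ∀ g : H, ⟪g, Tfun f - Sfun f⟫_ℂ = 0 := by
      intro g
      rw [inner_sub_right, congrFun hfun g, sub_self]
    have := hz (Tfun f - Sfun f)
    rw [inner_self_eq_zero, sub_eq_zero] at this
    exact this
end
end

section
/- Let ξ = (ξ_n)_{n∈ℕ} be a sequence in H such that D(C_ξ) is dense in H. If the operator Q_ξ is closed, then T_ξ = W_ξ (equality of operators, including domains). -/
noncomputable section
open scoped InnerProductSpace ComplexInnerProductSpace ComplexConjugate ENNReal
open Filter Topology

/- `H` is a separable complex Hilbert space. -/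
variable {H : Type} [NormedAddCommGroup H] [InnerProductSpace ℂ H] [CompleteSpace H]
  [TopologicalSpace.SeparableSpace H]

private lemma weak_unique {s : ℕ → H} {L L' : H}
    (h1 : ∀ y : H, Tendsto (fun k => ⟪y, s k⟫_ℂ) atTop (𝓝 ⟪y, L⟫_ℂ))
    (h2 : ∀ y : H, Tendsto (fun k => ⟪y, s k⟫_ℂ) atTop (𝓝 ⟪y, L'⟫_ℂ)) : L = L' :=
  ext_inner_left ℂ fun y => tendsto_nhds_unique (h1 y) (h2 y)

private def QLim (ξ : ℕ → H) (c : l2) (L : H) : Prop :=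
  ∀ y : H, Tendsto (fun k : ℕ => ⟪y, ∑ n ∈ Finset.range k, c n • ξ n⟫_ℂ) atTop (𝓝 ⟪y, L⟫_ℂ)

private lemma QLim_add {ξ : ℕ → H} {c c' : l2} {L L' : H} (h : QLim ξ c L) (h' : QLim ξ c' L') :
    QLim ξ (c + c') (L + L') := fun y => by
  have hsum := (h y).add (h' y)
  rw [← inner_add_right] at hsum
  refine hsum.congr fun k => ?_
  rw [← inner_add_right, ← Finset.sum_add_distrib]
  congr 1
  refine Finset.sum_congr rfl fun n _ => ?_
  rw [lp.coeFn_add]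
  simp [add_smul]

private lemma QLim_smul {ξ : ℕ → H} {c : l2} {L : H} (r : ℂ) (h : QLim ξ c L) :
    QLim ξ (r • c) (r • L) := fun y => by
  have hsum := (h y).const_mul r
  rw [← inner_smul_right] at hsum
  refine hsum.congr fun k => ?_
  rw [← inner_smul_right, Finset.smul_sum]
  congr 1
  refine Finset.sum_congr rfl fun n _ => ?_
  rw [lp.coeFn_smul]
  simp [smul_smul]

private lemma QLim_zero (ξ : ℕ → H) : QLim ξ (0 : l2) 0 := fun y => by
  have : ∀ k : ℕ, ⟪y, ∑ n ∈ Finset.range k, (0 : l2) n • ξ n⟫_ℂ = ⟪y, (0:H)⟫_ℂ := by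
    intro k; rw [lp.coeFn_zero]; simp
  exact Tendsto.congr (fun k => (this k).symm) tendsto_const_nhds

private lemma QLim_single (ξ : ℕ → H) (m : ℕ) : QLim ξ (lp.single 2 m (1:ℂ)) (ξ m) := fun y => by
  refine tendsto_atTop_of_eventually_const (i₀ := m + 1) fun k hk => ?_
  congr 1
  have h1 : ∀ n, (lp.single 2 m (1:ℂ) : l2) n • ξ n = if n = m then ξ m else 0 := by
    intro n; rw [lp.single_apply]; split_ifs with h <;> simp [h]
  rw [Finset.sum_congr rfl (fun n _ => h1 n), Finset.sum_ite_eq' (Finset.range k) m fun _ => ξ m]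
  simp [Nat.lt_of_lt_of_le (Nat.lt_succ_self m) hk]

private lemma summable_mul_inner (ξ : ℕ → H) {f g : H} (hf : f ∈ domC ξ) (hg : g ∈ domC ξ) :
    Summable (fun n => ⟪ξ n, f⟫_ℂ * ⟪g, ξ n⟫_ℂ) := by
  have hs := lp.summable_inner (𝕜 := ℂ) (⟨_, hg⟩ : l2) (⟨_, hf⟩ : l2)
  refine hs.congr fun n => ?_
  rw [show ⟪((⟨_, hg⟩ : l2) : ℕ → ℂ) n, ((⟨_, hf⟩ : l2) : ℕ → ℂ) n⟫_ℂ
      = conj ⟪ξ n, g⟫_ℂ * ⟪ξ n, f⟫_ℂ from RCLike.inner_apply' _ _, inner_conj_symm]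
  ring

private lemma tsum_eq_of_weak (ξ : ℕ → H) {f g L : H} (hf : f ∈ domC ξ) (hg : g ∈ domC ξ)
    (hL : Tendsto (fun k : ℕ => ⟪g, ∑ n ∈ Finset.range k, ⟪ξ n, f⟫_ℂ • ξ n⟫_ℂ) atTop
      (𝓝 ⟪g, L⟫_ℂ)) :
    ∑' n : ℕ, ⟪ξ n, f⟫_ℂ * ⟪g, ξ n⟫_ℂ = ⟪g, L⟫_ℂ := by
  have h2 := (summable_mul_inner ξ hf hg).hasSum.tendsto_sum_nat
  have h3 : ∀ k : ℕ, ∑ n ∈ Finset.range k, ⟪ξ n, f⟫_ℂ * ⟪g, ξ n⟫_ℂ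
      = ⟪g, ∑ n ∈ Finset.range k, ⟪ξ n, f⟫_ℂ • ξ n⟫_ℂ := by
    intro k; simp [inner_sum, inner_smul_right]
  exact tendsto_nhds_unique (Tendsto.congr h3 h2) hL

private lemma domW_mem_domC (ξ : ℕ → H) {f L : H}
    (hL : Tendsto (fun k : ℕ => ⟪f, ∑ n ∈ Finset.range k, ⟪ξ n, f⟫_ℂ • ξ n⟫_ℂ) atTop
      (𝓝 ⟪f, L⟫_ℂ)) : f ∈ domC ξ := by
  have h2 : ∀ k : ℕ, (⟪f, ∑ n ∈ Finset.range k, ⟪ξ n, f⟫_ℂ • ξ n⟫_ℂ).re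
      = ∑ n ∈ Finset.range k, ‖⟪ξ n, f⟫_ℂ‖^2 := by
    intro k
    rw [inner_sum, Complex.re_sum]
    refine Finset.sum_congr rfl fun n _ => ?_
    rw [inner_smul_right,
      show ⟪f, ξ n⟫_ℂ = conj ⟪ξ n, f⟫_ℂ from (inner_conj_symm _ _).symm, Complex.mul_conj']
    norm_cast
  have htend : Tendsto (fun k : ℕ => ∑ n ∈ Finset.range k, ‖⟪ξ n, f⟫_ℂ‖^2) atTop
      (𝓝 (⟪f, L⟫_ℂ).re) := by
    have := (Complex.continuous_re.tendsto _).comp hL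
    exact Tendsto.congr (fun k => h2 k) this
  have hmono : Monotone (fun k : ℕ => ∑ n ∈ Finset.range k, ‖⟪ξ n, f⟫_ℂ‖^2) := fun i j hij =>
    Finset.sum_le_sum_of_subset_of_nonneg (Finset.range_subset_range.mpr hij)
      (fun n _ _ => sq_nonneg _)
  have hsum : Summable (fun n : ℕ => ‖⟪ξ n, f⟫_ℂ‖^2) :=
    summable_of_sum_range_le (fun n => sq_nonneg _) (fun k => hmono.ge_of_tendsto htend k)
  apply memℓp_gen
  rw [show (fun n : ℕ => ‖⟪ξ n, f⟫_ℂ‖ ^ (2:ℝ≥0∞).toReal) = fun n => ‖⟪ξ n, f⟫_ℂ‖^2 by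
    funext n
    rw [show ((2:ℝ≥0∞).toReal) = ((2:ℕ):ℝ) by norm_num, Real.rpow_natCast]]
  exact hsum

/-- Let `ξ` be a sequence in `H` with `D(C_ξ)` dense.  If the operator `Q_ξ`
is closed, then `T_ξ = W_ξ` (equality of domains included). -/
theorem statement9 (ξ : ℕ → H) (hdense : Dense (domC ξ))
    (Qfun : l2 → H)
    (hQ : ∀ c ∈ domQ ξ, ∀ y : H,
      Tendsto (fun k : ℕ => ⟪y, ∑ n ∈ Finset.range k, c n • ξ n⟫_ℂ) atTop (𝓝 ⟪y, Qfun c⟫_ℂ))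
    (hQclosed : IsClosed {p : l2 × H | p.1 ∈ domQ ξ ∧ Qfun p.1 = p.2})
    (Wfun : H → H)
    (hW : ∀ f ∈ domW ξ, ∀ y : H,
      Tendsto (fun k : ℕ => ⟪y, ∑ n ∈ Finset.range k, ⟪ξ n, f⟫_ℂ • ξ n⟫_ℂ) atTop
        (𝓝 ⟪y, Wfun f⟫_ℂ))
    (Tfun : H → H)
    (hT : ∀ f ∈ domT ξ, Tfun f ∈ closure (domC ξ) ∧
      ∀ g ∈ domC ξ, ∑' n : ℕ, ⟪ξ n, f⟫_ℂ * ⟪g, ξ n⟫_ℂ = ⟪g, Tfun f⟫_ℂ) :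
    domT ξ = domW ξ ∧ ∀ f ∈ domT ξ, Tfun f = Wfun f := by
  classical
  have hQmem : ∀ {c : l2} {L : H}, QLim ξ c L → c ∈ domQ ξ ∧ Qfun c = L := by
    intro c L h
    have hc : c ∈ domQ ξ := ⟨L, h⟩
    exact ⟨hc, weak_unique (hQ c hc) h⟩
  -- the graph of Q as a closed submodule of `WithLp 2 (l2 × H)`
  let G : Submodule ℂ (WithLp 2 (l2 × H)) :=
    { carrier := {p | p.fst ∈ domQ ξ ∧ Qfun p.fst = p.snd}
      add_mem' := by
        rintro p q ⟨hp1, hp2⟩ ⟨hq1, hq2⟩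
        obtain ⟨Lp, hLp⟩ := hp1
        obtain ⟨Lq, hLq⟩ := hq1
        have h1 : QLim ξ p.fst p.snd := hp2 ▸ hQ p.fst ⟨Lp, hLp⟩
        have h2 : QLim ξ q.fst q.snd := hq2 ▸ hQ q.fst ⟨Lq, hLq⟩
        exact hQmem (QLim_add h1 h2)
      zero_mem' := hQmem (QLim_zero ξ)
      smul_mem' := by
        rintro r p ⟨hp1, hp2⟩
        obtain ⟨Lp, hLp⟩ := hp1
        have h1 : QLim ξ p.fst p.snd := hp2 ▸ hQ p.fst ⟨Lp, hLp⟩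
        exact hQmem (QLim_smul r h1) }
  have hGclosed : IsClosed (G : Set (WithLp 2 (l2 × H))) := by
    have heq : (G : Set (WithLp 2 (l2 × H)))
        = (WithLp.prodContinuousLinearEquiv 2 ℂ l2 H) ⁻¹'
          {p : l2 × H | p.1 ∈ domQ ξ ∧ Qfun p.1 = p.2} := rfl
    rw [heq]
    exact hQclosed.preimage (WithLp.prodContinuousLinearEquiv 2 ℂ l2 H).continuous
  haveI : CompleteSpace G := hGclosed.completeSpace_coe
  -- key claim: for `f ∈ domT ξ`, the partial sums converge weakly to `Tfun f`
  have key : ∀ f ∈ domT ξ, ∀ y : H,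
      Tendsto (fun k : ℕ => ⟪y, ∑ n ∈ Finset.range k, ⟪ξ n, f⟫_ℂ • ξ n⟫_ℂ) atTop
        (𝓝 ⟪y, Tfun f⟫_ℂ) := by
    intro f hf
    have hfC := hf.1
    have hTf := (hT f hf).2
    set c : l2 := ⟨fun n => ⟪ξ n, f⟫_ℂ, hfC⟩ with hc
    set v : WithLp 2 (l2 × H) := (WithLp.equiv 2 (l2 × H)).symm (c, Tfun f) with hv
    have hvG : v ∈ G := by
      rw [← Submodule.orthogonal_orthogonal G, Submodule.mem_orthogonal]
      intro u hu
      have hu' : ∀ w ∈ G, ⟪w, u⟫_ℂ = 0 := (Submodule.mem_orthogonal G u).mp hu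
      -- `u.fst m = -⟪ξ m, u.snd⟫`
      have hab : ∀ m : ℕ, u.fst m = -⟪ξ m, u.snd⟫_ℂ := by
        intro m
        have hw : ((WithLp.equiv 2 (l2 × H)).symm (lp.single 2 m (1:ℂ), ξ m)) ∈ G :=
          hQmem (QLim_single ξ m)
        have h0 := hu' _ hw
        rw [WithLp.prod_inner_apply] at h0
        have h0' : ⟪lp.single 2 m (1:ℂ), u.fst⟫_ℂ + ⟪ξ m, u.snd⟫_ℂ = 0 := h0
        rw [lp.inner_single_left] at h0'
        have : u.fst m + ⟪ξ m, u.snd⟫_ℂ = 0 := by simpa using h0'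
        linear_combination this
      have hbC : u.snd ∈ domC ξ := by
        have heq2 : (fun n => ⟪ξ n, u.snd⟫_ℂ) = fun n => (-u.fst : l2) n := by
          funext n; rw [lp.coeFn_neg]; simp [hab n]
        show Memℓp (fun n => ⟪ξ n, u.snd⟫_ℂ) 2
        rw [heq2]
        exact lp.memℓp _
      rw [WithLp.prod_inner_apply]
      have h1 : ⟪u.fst, v.fst⟫_ℂ = -⟪u.snd, Tfun f⟫_ℂ := by
        rw [lp.inner_eq_tsum]
        have h2 : (fun n => ⟪u.fst n, v.fst n⟫_ℂ)
            = fun n => -(⟪ξ n, f⟫_ℂ * ⟪u.snd, ξ n⟫_ℂ) := by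
          funext n
          rw [show ⟪u.fst n, v.fst n⟫_ℂ = conj (u.fst n) * ⟪ξ n, f⟫_ℂ from RCLike.inner_apply' _ _, hab n]
          rw [map_neg, inner_conj_symm]
          ring
        rw [h2, tsum_neg, hTf u.snd hbC]
      change ⟪u.fst, v.fst⟫_ℂ + ⟪u.snd, v.snd⟫_ℂ = 0
      rw [h1]
      have h3 : ⟪u.snd, v.snd⟫_ℂ = ⟪u.snd, Tfun f⟫_ℂ := rfl
      rw [h3]
      ring
    obtain ⟨hcQ, hQc⟩ := hvG
    intro y
    have hQc' : Qfun c = Tfun f := hQc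
    have hten := hQ _ (show c ∈ domQ ξ from hcQ) y
    rw [hQc'] at hten
    exact hten
  have hWT : domW ξ ⊆ domT ξ := by
    rintro f ⟨L, hL⟩
    have hfC : f ∈ domC ξ := domW_mem_domC ξ (hL f)
    refine ⟨hfC, L, ?_, fun g hg => tsum_eq_of_weak ξ hfC hg (hL g)⟩
    rw [hdense.closure_eq]; trivial
  have hTW : domT ξ ⊆ domW ξ := fun f hf => ⟨Tfun f, key f hf⟩
  refine ⟨Set.Subset.antisymm hTW hWT, fun f hf => ?_⟩
  exact weak_unique (key f hf) (hW f (hTW hf))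
end
end

section
/- Let ξ = (ξ_n)_{n∈ℕ} be a sequence in H such that D(C_ξ) is dense in H, and let f ∈ D(T_ξ). Then f ∈ D(W_ξ) if and only if sup_{k∈ℕ} ∥Σ_{n=1}^k ⟨f,ξ_n⟩ξ_n∥ < ∞. -/
noncomputable section
open scoped InnerProductSpace ComplexInnerProductSpace ComplexConjugate ENNReal
open Filter Topology

/- `H` is a separable complex Hilbert space. -/
variable {H : Type} [NormedAddCommGroup H] [InnerProductSpace ℂ H] [CompleteSpace H]
  [TopologicalSpace.SeparableSpace H]

/-- Let `ξ` be a sequence in `H` with `D(C_ξ)` dense and let `f ∈ D(T_ξ)`.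
Then `f ∈ D(W_ξ)` if and only if the partial sums `Σ_{n<k} ⟨f,ξ_n⟩ ξ_n` are norm bounded. -/
theorem statement10 (ξ : ℕ → H) (hdense : Dense (domC ξ)) (f : H) (hf : f ∈ domT ξ) :
    f ∈ domW ξ ↔ ∃ M : ℝ, ∀ k : ℕ, ‖∑ n ∈ Finset.range k, ⟪ξ n, f⟫_ℂ • ξ n‖ ≤ M := by
  set S : ℕ → H := fun k => ∑ n ∈ Finset.range k, ⟪ξ n, f⟫_ℂ • ξ n with hS
  constructor
  · rintro ⟨L, hL⟩
    have hpt : ∀ y : H, ∃ C : ℝ, ∀ k : ℕ, ‖innerSL ℂ (S k) y‖ ≤ C := by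
      intro y
      obtain ⟨C, hC⟩ := ((hL y).norm).bddAbove_range
      refine ⟨C, fun k => ?_⟩
      have : ‖(innerSL ℂ (S k)) y‖ = ‖⟪y, S k⟫_ℂ‖ := norm_inner_symm _ _
      rw [this]
      exact hC ⟨k, rfl⟩
    obtain ⟨C', hC'⟩ := banach_steinhaus hpt
    exact ⟨C', fun k => by rw [← innerSL_apply_norm (𝕜 := ℂ) (S k)]; exact hC' k⟩
  · rintro ⟨M, hM⟩
    obtain ⟨hfC, h, hhcl, hsum⟩ := hf
    refine ⟨h, fun y => ?_⟩
    have key : ∀ g ∈ domC ξ, Tendsto (fun k => ⟪g, S k⟫_ℂ) atTop (𝓝 ⟪g, h⟫_ℂ) := by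
      intro g hg
      have hsumm : Summable (fun n => ⟪ξ n, f⟫_ℂ * ⟪g, ξ n⟫_ℂ) := by
        have h1 : Summable (fun n : ℕ => ⟪(⟨_, hfC⟩ : l2) n, (⟨_, hg⟩ : l2) n⟫_ℂ) :=
          lp.summable_inner (⟨_, hfC⟩ : l2) (⟨_, hg⟩ : l2)
        have h2 := h1.map (starRingEnd ℂ) Complex.continuous_conj
        refine h2.congr fun n => ?_
        simp only [Function.comp, RCLike.inner_apply, map_mul, starRingEnd_self_apply,
          ← inner_conj_symm g (ξ n)]
        exact mul_comm _ _
      have h3 := hsumm.hasSum.tendsto_sum_nat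
      rw [hsum g hg] at h3
      refine Tendsto.congr (fun k => ?_) h3
      simp [hS, inner_sum, inner_smul_right, mul_comm]
    have hM0 : 0 ≤ M := le_trans (by simp [hS]) (hM 0)
    set B : ℝ := M + ‖h‖ + 1 with hB
    have hBpos : 0 < B := by positivity
    rw [Metric.tendsto_atTop]
    intro ε hε
    obtain ⟨g, hg, hgy⟩ := hdense.exists_dist_lt y (div_pos hε (by positivity) : 0 < ε / (3 * B))
    obtain ⟨N, hN⟩ := Metric.tendsto_atTop.mp (key g hg) (ε / 3) (by positivity)
    refine ⟨N, fun k hk => ?_⟩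
    have hyg : ‖y - g‖ < ε / (3 * B) := by rwa [← dist_eq_norm]
    have hdec : ⟪y, S k⟫_ℂ - ⟪y, h⟫_ℂ
        = ⟪y - g, S k⟫_ℂ + (⟪g, S k⟫_ℂ - ⟪g, h⟫_ℂ) - ⟪y - g, h⟫_ℂ := by
      simp [inner_sub_left]
    have hb1 : ‖⟪y - g, S k⟫_ℂ‖ < ε / 3 := by
      calc ‖⟪y - g, S k⟫_ℂ‖ ≤ ‖y - g‖ * ‖S k‖ := norm_inner_le_norm _ _
        _ ≤ ‖y - g‖ * B :=
            mul_le_mul_of_nonneg_left ((hM k).trans (by rw [hB]; nlinarith [norm_nonneg h]))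
              (norm_nonneg _)
        _ < (ε / (3 * B)) * B := mul_lt_mul_of_pos_right hyg hBpos
        _ = ε / 3 := by field_simp
    have hb3 : ‖⟪y - g, h⟫_ℂ‖ < ε / 3 := by
      calc ‖⟪y - g, h⟫_ℂ‖ ≤ ‖y - g‖ * ‖h‖ := norm_inner_le_norm _ _
        _ ≤ ‖y - g‖ * B :=
            mul_le_mul_of_nonneg_left (by rw [hB]; nlinarith) (norm_nonneg _)
        _ < (ε / (3 * B)) * B := mul_lt_mul_of_pos_right hyg hBpos
        _ = ε / 3 := by field_simp
    have hb2 : ‖⟪g, S k⟫_ℂ - ⟪g, h⟫_ℂ‖ < ε / 3 := by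
      have := hN k hk; rwa [dist_eq_norm] at this
    rw [dist_eq_norm, hdec]
    calc ‖⟪y - g, S k⟫_ℂ + (⟪g, S k⟫_ℂ - ⟪g, h⟫_ℂ) - ⟪y - g, h⟫_ℂ‖
        ≤ ‖⟪y - g, S k⟫_ℂ + (⟪g, S k⟫_ℂ - ⟪g, h⟫_ℂ)‖ + ‖⟪y - g, h⟫_ℂ‖ := norm_sub_le _ _
      _ ≤ ‖⟪y - g, S k⟫_ℂ‖ + ‖⟪g, S k⟫_ℂ - ⟪g, h⟫_ℂ‖ + ‖⟪y - g, h⟫_ℂ‖ := by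
          gcongr; exact norm_add_le _ _
      _ < ε / 3 + ε / 3 + ε / 3 := by gcongr
      _ = ε := by ring
end
end
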